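/- arXiv:1703.05688 — 6 statements merged into one kernel-verified Lean document; each statement's English description precedes it below -/
import Mathlib

section
/- For all multi-indices α, β ∈ ℕ^n and every 1 ≤ j ≤ n, the function f_{α,β} = b^α (z^β exp(−(π/2) Σ_{i=1}^n |z_i|²)) on ℂ^n, where b^α = b_1^{α_1} ⋯ b_n^{α_n}, satisfies b_j b_j^+ f_{α,β} = 4π α_j f_{α,β}. -/
open MeasureTheory Complex

noncomputable section

/-- The Wirtinger derivative `∂/∂z_j` of a function on `ℂⁿ ≅ ℝ^{2n}`. -/
def wirtingerD {n : ℕ} (j : Fin n) (f : (Fin n → ℂ) → ℂ) (z : Fin n → ℂ) : ℂ :=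
  (1 / 2) * (fderiv ℝ f z (Pi.single j 1) - Complex.I * fderiv ℝ f z (Pi.single j Complex.I))

/-- The Wirtinger derivative `∂/∂z̄_j` of a function on `ℂⁿ ≅ ℝ^{2n}`. -/
def wirtingerDBar {n : ℕ} (j : Fin n) (f : (Fin n → ℂ) → ℂ) (z : Fin n → ℂ) : ℂ :=
  (1 / 2) * (fderiv ℝ f z (Pi.single j 1) + Complex.I * fderiv ℝ f z (Pi.single j Complex.I))

/-- The creation operator `b_j = -2 ∂/∂z_j + π z̄_j`. -/
def bOp {n : ℕ} (j : Fin n) (f : (Fin n → ℂ) → ℂ) : (Fin n → ℂ) → ℂ :=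
  fun z => -2 * wirtingerD j f z + (Real.pi : ℂ) * (starRingEnd ℂ) (z j) * f z

/-- The annihilation operator `b_j⁺ = 2 ∂/∂z̄_j + π z_j`. -/
def bPlusOp {n : ℕ} (j : Fin n) (f : (Fin n → ℂ) → ℂ) : (Fin n → ℂ) → ℂ :=
  fun z => 2 * wirtingerDBar j f z + (Real.pi : ℂ) * z j * f z

/-- The Gaussian `exp(-(π/2) Σ |z_i|²)`. -/
def gaussFn {n : ℕ} (z : Fin n → ℂ) : ℂ :=
  Complex.exp (-((Real.pi : ℂ) / 2) * ∑ i, (Complex.normSq (z i) : ℂ))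

/-- The iterated operator `b^α = b_1^{α_1} ∘ ⋯ ∘ b_n^{α_n}`. -/
def bPow {n : ℕ} (α : Fin n → ℕ) (f : (Fin n → ℂ) → ℂ) : (Fin n → ℂ) → ℂ :=
  (List.ofFn (fun j : Fin n => (bOp j)^[α j])).foldr (· ∘ ·) id f

/-- The eigenfunctions `f_{α,β} = b^α (z^β exp(-(π/2) Σ |z_i|²))` of the model operator. -/
def eigFun {n : ℕ} (α β : Fin n → ℕ) : (Fin n → ℂ) → ℂ :=
  bPow α (fun z => (∏ j, z j ^ β j) * gaussFn z)

/-- The model Bergman kernel `𝒫(z,w) = exp(-(π/2) Σ (|z_j|² + |w_j|² - 2 z_j w̄_j))`. -/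
def bergK {n : ℕ} (z w : Fin n → ℂ) : ℂ :=
  Complex.exp (-((Real.pi : ℂ) / 2) *
    ∑ j, ((Complex.normSq (z j) : ℂ) + (Complex.normSq (w j) : ℂ)
            - 2 * z j * (starRingEnd ℂ) (w j)))

/-- `F : ℂⁿ × ℂⁿ → ℂ` is a polynomial function in the underlying real coordinates, equivalently
a polynomial in the coordinates `z_i, z̄_i` of the first argument and `z'_i, z̄'_i` of the
second one. -/
def IsPolyKernel {n : ℕ} (F : (Fin n → ℂ) → (Fin n → ℂ) → ℂ) : Prop :=
  ∃ p : MvPolynomial (Fin n ⊕ Fin n ⊕ Fin n ⊕ Fin n) ℂ,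
    ∀ z z' : Fin n → ℂ,
      F z z' = MvPolynomial.eval
        (Sum.elim (fun i => z i) (Sum.elim (fun i => (starRingEnd ℂ) (z i))
          (Sum.elim (fun i => z' i) (fun i => (starRingEnd ℂ) (z' i))))) p

/-- Under the identification `ℝ^{2n} ≅ ℂⁿ`, `z_j = Z_{2j-1} + i Z_{2j}`, the direction in `ℂⁿ`
corresponding to the `j`-th real coordinate `Z_j`. -/
def coordDir {n : ℕ} (j : Fin (2 * n)) : Fin n → ℂ :=
  Pi.single ⟨j.val / 2, by have := j.isLt; omega⟩ (if j.val % 2 = 0 then 1 else Complex.I)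

/-- The `j`-th real coordinate of `w ∈ ℂⁿ ≅ ℝ^{2n}`, viewed as a complex number. -/
def realCoordC {n : ℕ} (j : Fin (2 * n)) (w : Fin n → ℂ) : ℂ :=
  if j.val % 2 = 0 then ((w ⟨j.val / 2, by have := j.isLt; omega⟩).re : ℂ)
  else ((w ⟨j.val / 2, by have := j.isLt; omega⟩).im : ℂ)

/-- The partial derivative `∂/∂Z_j` in the `j`-th real coordinate of `ℂⁿ ≅ ℝ^{2n}`. -/
def realPDeriv {n : ℕ} (j : Fin (2 * n)) (f : (Fin n → ℂ) → ℂ) (z : Fin n → ℂ) : ℂ :=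
  fderiv ℝ f z (coordDir j)

/-- The iterated partial derivative `∂^α` in the real coordinates of `ℂⁿ ≅ ℝ^{2n}`,
for a multi-index `α ∈ ℕ^{2n}`. -/
def iterD {n : ℕ} (α : Fin (2 * n) → ℕ) (f : (Fin n → ℂ) → ℂ) : (Fin n → ℂ) → ℂ :=
  (List.ofFn (fun j : Fin (2 * n) =>
    (fun (g : (Fin n → ℂ) → ℂ) (z : Fin n → ℂ) => fderiv ℝ g z (coordDir j))^[α j])).foldr
    (· ∘ ·) id f

namespace BJaux

open MvPolynomial

variable {n : ℕ}

abbrev σn (n : ℕ) := Fin n ⊕ Fin n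

def vmap (z : Fin n → ℂ) : σn n → ℂ := Sum.elim z (fun i => (starRingEnd ℂ) (z i))

def pe (p : MvPolynomial (σn n) ℂ) (z : Fin n → ℂ) : ℂ := eval (vmap z) p

def Efun (p : MvPolynomial (σn n) ℂ) (z : Fin n → ℂ) : ℂ := pe p z * gaussFn z

def basisCLM (u : σn n) : (Fin n → ℂ) →L[ℝ] ℂ :=
  Sum.elim (fun i => ContinuousLinearMap.proj i)
    (fun i => Complex.conjCLE.toContinuousLinearMap.comp (ContinuousLinearMap.proj i)) u

lemma basisCLM_inl (i : Fin n) (w : Fin n → ℂ) : basisCLM (Sum.inl i) w = w i := rfl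
lemma basisCLM_inr (i : Fin n) (w : Fin n → ℂ) :
    basisCLM (Sum.inr i) w = (starRingEnd ℂ) (w i) := rfl

def pdL (p : MvPolynomial (σn n) ℂ) (z : Fin n → ℂ) : (Fin n → ℂ) →L[ℝ] ℂ :=
  ∑ u, pe (pderiv u p) z • basisCLM u

lemma hasFDerivAt_coord (u : σn n) (z : Fin n → ℂ) :
    HasFDerivAt (fun z : Fin n → ℂ => vmap z u) (basisCLM u) z := by
  cases u with
  | inl i => exact (ContinuousLinearMap.proj (R := ℝ) i :
      (Fin n → ℂ) →L[ℝ] ℂ).hasFDerivAt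
  | inr i => exact (basisCLM (Sum.inr i)).hasFDerivAt

lemma hasFDerivAt_pe (p : MvPolynomial (σn n) ℂ) (z : Fin n → ℂ) :
    HasFDerivAt (pe p) (pdL p z) z := by
  classical
  induction p using MvPolynomial.induction_on with
  | C a =>
    have h1 : pe (n := n) (C a) = fun _ => a := by
      funext w; simp [pe]
    have h2 : pdL (n := n) (C a) z = 0 := by
      have h : ∀ u : σn n, pe (pderiv u (C a : MvPolynomial (σn n) ℂ)) z • basisCLM u = 0 := by
        intro u
        rw [pderiv_C, show pe (0 : MvPolynomial (σn n) ℂ) z = 0 from map_zero _]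
        exact zero_smul ℂ (A := (Fin n → ℂ) →L[ℝ] ℂ) _
      unfold pdL
      rw [Finset.sum_congr rfl fun u _ => h u, Finset.sum_const_zero]
    rw [h1, h2]
    exact hasFDerivAt_const a z
  | add p q hp hq =>
    have h1 : pe (p + q) = fun w => pe p w + pe q w := by
      funext w; simp [pe]
    have h2 : pdL (p + q) z = pdL p z + pdL q z := by
      unfold pdL
      rw [← Finset.sum_add_distrib]
      refine Finset.sum_congr rfl fun w _ => ?_
      rw [map_add,
        show pe ((pderiv w) p + (pderiv w) q) z = pe ((pderiv w) p) z + pe ((pderiv w) q) z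
          from map_add _ _ _]
      exact add_smul (R := ℂ) (M := (Fin n → ℂ) →L[ℝ] ℂ) _ _ _
    rw [h1, h2]
    exact hp.add hq
  | mul_X p u hp =>
    have h1 : pe (p * X u) = fun w => pe p w * vmap w u := by
      funext w; simp [pe]
    have h2 : pdL (p * X u) z = pe p z • basisCLM u + vmap z u • pdL p z := by
      have expand : ∀ w : σn n, pe (pderiv w (p * X u)) z • basisCLM w
          = vmap z u • (pe (pderiv w p) z • basisCLM w)
            + (if u = w then pe p z • basisCLM u else 0) := by
        intro w
        rw [pderiv_mul]
        by_cases hw : u = w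
        · subst hw
          rw [pderiv_X_self, mul_one, if_pos rfl, smul_smul]
          have hpe : pe ((pderiv u) p * X u + p) z
              = vmap z u * pe ((pderiv u) p) z + pe p z := by
            simp [pe, mul_comm]
          rw [hpe]
          exact add_smul (R := ℂ) (M := (Fin n → ℂ) →L[ℝ] ℂ) _ _ _
        · rw [pderiv_X_of_ne hw, mul_zero, add_zero, if_neg hw, add_zero, smul_smul]
          have hpe : pe ((pderiv w) p * X u) z = vmap z u * pe ((pderiv w) p) z := by
            simp [pe, mul_comm]
          rw [hpe]
      rw [pdL, Finset.sum_congr rfl (fun w _ => expand w), Finset.sum_add_distrib,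
        ← Finset.smul_sum, Finset.sum_ite_eq]
      simp only [Finset.mem_univ, if_true]
      rw [add_comm]
      rfl
    rw [h1, h2]
    exact hp.mul (hasFDerivAt_coord u z)

end BJaux

namespace BJaux
open MvPolynomial
variable {n : ℕ}

/-- The Gaussian exponent polynomial. -/
def Gp (n : ℕ) : MvPolynomial (σn n) ℂ :=
  C (-(Real.pi / 2 : ℂ)) * ∑ i : Fin n, X (Sum.inl i) * X (Sum.inr i)

lemma gauss_eq (z : Fin n → ℂ) : gaussFn z = Complex.exp (pe (Gp n) z) := by
  unfold gaussFn pe Gp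
  congr 1
  simp [vmap, Complex.mul_conj, Finset.mul_sum]

lemma pderiv_Gp_inl (j : Fin n) :
    pderiv (Sum.inl j) (Gp n) = C (-(Real.pi / 2 : ℂ)) * X (Sum.inr j) := by
  rw [Gp, pderiv_C_mul, map_sum]
  congr 1
  rw [Finset.sum_eq_single j]
  · rw [pderiv_mul, pderiv_X_self, pderiv_X_of_ne (by simp), one_mul, mul_zero, add_zero]
  · intro i _ hij
    rw [pderiv_mul, pderiv_X_of_ne (by simp [hij]), pderiv_X_of_ne (by simp), zero_mul,
      mul_zero, add_zero]
  · simp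
lemma pderiv_Gp_inr (j : Fin n) :
    pderiv (Sum.inr j) (Gp n) = C (-(Real.pi / 2 : ℂ)) * X (Sum.inl j) := by
  rw [Gp, pderiv_C_mul, map_sum]
  congr 1
  rw [Finset.sum_eq_single j]
  · rw [pderiv_mul, pderiv_X_self, pderiv_X_of_ne (by simp), zero_mul, mul_one, zero_add]
  · intro i _ hij
    rw [pderiv_mul, pderiv_X_of_ne (by simp), pderiv_X_of_ne (by simp [hij]), zero_mul,
      mul_zero, add_zero]
  · simp

lemma hasFDerivAt_E (p : MvPolynomial (σn n) ℂ) (z : Fin n → ℂ) :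
    HasFDerivAt (Efun p)
      (pe p z • (Complex.exp (pe (Gp n) z) • pdL (Gp n) z)
        + Complex.exp (pe (Gp n) z) • pdL p z) z := by
  have h1 : Efun p = fun w => pe p w * Complex.exp (pe (Gp n) w) := by
    funext w; rw [Efun, gauss_eq]
  rw [h1]
  exact (hasFDerivAt_pe p z).mul ((hasFDerivAt_pe (Gp n) z).cexp)

lemma pdL_apply (p : MvPolynomial (σn n) ℂ) (z : Fin n → ℂ) (j : Fin n) (c : ℂ) :
    pdL p z (Pi.single j c)
      = pe (pderiv (Sum.inl j) p) z * c
        + pe (pderiv (Sum.inr j) p) z * (starRingEnd ℂ) c := by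
  classical
  rw [pdL, ContinuousLinearMap.sum_apply, Fintype.sum_sum_type]
  have hl : ∀ i : Fin n, (pe (pderiv (Sum.inl i) p) z • basisCLM (Sum.inl i)) (Pi.single j c)
      = if i = j then pe (pderiv (Sum.inl i) p) z * c else 0 := by
    intro i
    rw [ContinuousLinearMap.smul_apply, basisCLM_inl, Pi.single_apply]
    split <;> simp
  have hr : ∀ i : Fin n, (pe (pderiv (Sum.inr i) p) z • basisCLM (Sum.inr i)) (Pi.single j c)
      = if i = j then pe (pderiv (Sum.inr i) p) z * (starRingEnd ℂ) c else 0 := by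
    intro i
    rw [ContinuousLinearMap.smul_apply, basisCLM_inr, Pi.single_apply]
    split <;> simp
  rw [Finset.sum_congr rfl (fun i _ => hl i), Finset.sum_congr rfl (fun i _ => hr i),
    Finset.sum_ite_eq', Finset.sum_ite_eq']
  simp

end BJaux


namespace BJaux
open MvPolynomial
variable {n : ℕ}

lemma peGp_inl (j : Fin n) (z : Fin n → ℂ) :
    pe (pderiv (Sum.inl j) (Gp n)) z = -(Real.pi / 2 : ℂ) * (starRingEnd ℂ) (z j) := by
  rw [pderiv_Gp_inl]; simp [pe, vmap]

lemma peGp_inr (j : Fin n) (z : Fin n → ℂ) :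
    pe (pderiv (Sum.inr j) (Gp n)) z = -(Real.pi / 2 : ℂ) * z j := by
  rw [pderiv_Gp_inr]; simp [pe, vmap]

lemma wirtingerD_E (j : Fin n) (p : MvPolynomial (σn n) ℂ) (z : Fin n → ℂ) :
    wirtingerD j (Efun p) z
      = pe p z * (Complex.exp (pe (Gp n) z) * pe (pderiv (Sum.inl j) (Gp n)) z)
        + Complex.exp (pe (Gp n) z) * pe (pderiv (Sum.inl j) p) z := by
  rw [wirtingerD, (hasFDerivAt_E p z).fderiv]
  simp only [ContinuousLinearMap.add_apply, ContinuousLinearMap.smul_apply, pdL_apply,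
    smul_eq_mul, map_one, Complex.conj_I, mul_one]
  linear_combination ((pe p z * Complex.exp (pe (Gp n) z) * pe (pderiv (Sum.inr j) (Gp n)) z
      + Complex.exp (pe (Gp n) z) * pe (pderiv (Sum.inr j) p) z
      - pe p z * Complex.exp (pe (Gp n) z) * pe (pderiv (Sum.inl j) (Gp n)) z
      - Complex.exp (pe (Gp n) z) * pe (pderiv (Sum.inl j) p) z) / 2) * Complex.I_sq

lemma wirtingerDBar_E (j : Fin n) (p : MvPolynomial (σn n) ℂ) (z : Fin n → ℂ) :
    wirtingerDBar j (Efun p) z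
      = pe p z * (Complex.exp (pe (Gp n) z) * pe (pderiv (Sum.inr j) (Gp n)) z)
        + Complex.exp (pe (Gp n) z) * pe (pderiv (Sum.inr j) p) z := by
  rw [wirtingerDBar, (hasFDerivAt_E p z).fderiv]
  simp only [ContinuousLinearMap.add_apply, ContinuousLinearMap.smul_apply, pdL_apply,
    smul_eq_mul, map_one, Complex.conj_I, mul_one]
  linear_combination ((pe p z * Complex.exp (pe (Gp n) z) * pe (pderiv (Sum.inl j) (Gp n)) z
      + Complex.exp (pe (Gp n) z) * pe (pderiv (Sum.inl j) p) z
      - pe p z * Complex.exp (pe (Gp n) z) * pe (pderiv (Sum.inr j) (Gp n)) z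
      - Complex.exp (pe (Gp n) z) * pe (pderiv (Sum.inr j) p) z) / 2) * Complex.I_sq

/-- Polynomial-level creation operator. -/
def PB (j : Fin n) (p : MvPolynomial (σn n) ℂ) : MvPolynomial (σn n) ℂ :=
  C (-2 : ℂ) * pderiv (Sum.inl j) p + C (2 * (Real.pi : ℂ)) * (X (Sum.inr j) * p)

/-- Polynomial-level annihilation operator. -/
def PBp (j : Fin n) (p : MvPolynomial (σn n) ℂ) : MvPolynomial (σn n) ℂ :=
  C (2 : ℂ) * pderiv (Sum.inr j) p

lemma bOp_E (j : Fin n) (p : MvPolynomial (σn n) ℂ) :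
    bOp j (Efun p) = Efun (PB j p) := by
  funext z
  have hg : Complex.exp (pe (Gp n) z) = gaussFn z := (gauss_eq z).symm
  rw [bOp]
  show -2 * wirtingerD j (Efun p) z + _ = _
  rw [wirtingerD_E, peGp_inl, hg, Efun, Efun]
  have hpe : pe (PB j p) z
      = -2 * pe (pderiv (Sum.inl j) p) z
        + 2 * (Real.pi : ℂ) * ((starRingEnd ℂ) (z j) * pe p z) := by
    simp [PB, pe, vmap]
  rw [hpe]
  ring

lemma bPlus_E (j : Fin n) (p : MvPolynomial (σn n) ℂ) :
    bPlusOp j (Efun p) = Efun (PBp j p) := by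
  funext z
  have hg : Complex.exp (pe (Gp n) z) = gaussFn z := (gauss_eq z).symm
  rw [bPlusOp]
  show 2 * wirtingerDBar j (Efun p) z + _ = _
  rw [wirtingerDBar_E, peGp_inr, hg, Efun, Efun]
  have hpe : pe (PBp j p) z = 2 * pe (pderiv (Sum.inr j) p) z := by
    simp [PBp, pe]
  rw [hpe]
  ring

end BJaux

namespace BJaux
open MvPolynomial
variable {n : ℕ}

lemma pderiv_pderiv_comm {σ : Type*} [DecidableEq σ] (u v : σ)
    (p : MvPolynomial σ ℂ) :
    pderiv u (pderiv v p) = pderiv v (pderiv u p) := by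
  induction p using MvPolynomial.induction_on' with
  | add p q hp hq => rw [map_add, map_add, hp, hq, map_add, map_add]
  | monomial s a =>
    rcases eq_or_ne u v with rfl | huv
    · rfl
    · rw [pderiv_monomial, pderiv_monomial, pderiv_monomial, pderiv_monomial]
      have hidx : s - Finsupp.single v 1 - Finsupp.single u 1
          = s - Finsupp.single u 1 - Finsupp.single v 1 := tsub_right_comm
      have h1 : (s - (Finsupp.single v 1 : σ →₀ ℕ)) u = s u := by
        rw [Finsupp.tsub_apply, Finsupp.single_apply, if_neg (by exact fun h => huv h.symm)]
        rfl
      have h2 : (s - (Finsupp.single u 1 : σ →₀ ℕ)) v = s v := by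
        rw [Finsupp.tsub_apply, Finsupp.single_apply, if_neg (by exact fun h => huv h)]
        rfl
      rw [hidx, h1, h2, mul_right_comm]

lemma PB_C_mul (j : Fin n) (c : ℂ) (p : MvPolynomial (σn n) ℂ) :
    PB j (C c * p) = C c * PB j p := by
  rw [PB, PB, pderiv_C_mul]; ring

lemma PB_zero (j : Fin n) : PB j (0 : MvPolynomial (σn n) ℂ) = 0 := by
  simp [PB]

lemma PB_comm (j k : Fin n) (p : MvPolynomial (σn n) ℂ) :
    PB j (PB k p) = PB k (PB j p) := by
  rcases eq_or_ne j k with rfl | hjk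
  · rfl
  · rw [PB, PB, PB, PB]
    rw [map_add, map_add, pderiv_C_mul, pderiv_C_mul, pderiv_C_mul, pderiv_C_mul,
      pderiv_mul, pderiv_mul, pderiv_X_of_ne (by simp [hjk]),
      pderiv_X_of_ne (by simp [Ne.symm hjk]), pderiv_pderiv_comm]
    ring

/-- The key commutator relation `B⁺_j ∘ B_j = B_j ∘ B⁺_j + 4π`. -/
lemma PBp_PB_self (j : Fin n) (p : MvPolynomial (σn n) ℂ) :
    PBp j (PB j p) = PB j (PBp j p) + C (4 * (Real.pi : ℂ)) * p := by
  rw [PBp, PB, PB, PBp]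
  rw [map_add, pderiv_C_mul, pderiv_C_mul, pderiv_mul, pderiv_X_self,
    pderiv_C_mul, pderiv_pderiv_comm]
  have hc : (C (4 * (Real.pi : ℂ)) : MvPolynomial (σn n) ℂ)
      = C (2 : ℂ) * C (2 * (Real.pi : ℂ)) := by
    rw [← C_mul]; congr 1; ring
  rw [hc]
  ring

lemma PBp_PB_ne (j k : Fin n) (hjk : k ≠ j) (p : MvPolynomial (σn n) ℂ) :
    PBp j (PB k p) = PB k (PBp j p) := by
  rw [PBp, PB, PB, PBp]
  rw [map_add, pderiv_C_mul, pderiv_C_mul, pderiv_mul,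
    pderiv_X_of_ne (by simp [hjk]), pderiv_C_mul, pderiv_pderiv_comm]
  ring

lemma PBp_prod (j : Fin n) (β : Fin n → ℕ) :
    PBp j (∏ i : Fin n, (X (Sum.inl i) : MvPolynomial (σn n) ℂ) ^ β i) = 0 := by
  rw [PBp]
  have h : pderiv (Sum.inr j)
      (∏ i : Fin n, (X (Sum.inl i) : MvPolynomial (σn n) ℂ) ^ β i) = 0 := by
    refine Finset.prod_induction _ (fun q => pderiv (Sum.inr j) q = 0) ?_ ?_ ?_
    · intro a b ha hb; rw [pderiv_mul, ha, hb, zero_mul, mul_zero, add_zero]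
    · exact pderiv_one
    · intro i _
      rw [pderiv_pow, pderiv_X_of_ne (by simp), mul_zero]
  rw [h, mul_zero]

/-- Apply a word of creation operators. -/
def applyL (l : List (Fin n)) (p : MvPolynomial (σn n) ℂ) : MvPolynomial (σn n) ℂ :=
  l.foldr (fun k q => PB k q) p

lemma applyL_perm {l₁ l₂ : List (Fin n)} (h : l₁.Perm l₂) (p : MvPolynomial (σn n) ℂ) :
    applyL l₁ p = applyL l₂ p :=
  @List.Perm.foldr_eq _ _ (fun k q => PB k q) l₁ l₂ ⟨fun a b c => PB_comm a b c⟩ h p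

lemma PB_applyL_erase {j : Fin n} {l : List (Fin n)} (hj : j ∈ l)
    (p : MvPolynomial (σn n) ℂ) :
    PB j (applyL (l.erase j) p) = applyL l p := by
  have h := applyL_perm (List.perm_cons_erase hj).symm p
  rw [← h]
  rfl

lemma PBp_applyL (j : Fin n) (l : List (Fin n)) (q : MvPolynomial (σn n) ℂ)
    (hq : PBp j q = 0) :
    PBp j (applyL l q) = C (4 * (Real.pi : ℂ) * (l.count j : ℂ)) * applyL (l.erase j) q := by
  induction l with
  | nil => simpa [applyL] using hq
  | cons k l ih =>
    rcases eq_or_ne k j with rfl | hkj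
    · have h1 : applyL (k :: l) q = PB k (applyL l q) := rfl
      rw [h1, PBp_PB_self, ih, List.count_cons_self, List.erase_cons_head]
      by_cases hmem : k ∈ l
      · rw [PB_C_mul, PB_applyL_erase hmem, ← add_mul, ← C_add]
        congr 2
        push_cast
        ring
      · have hc : l.count k = 0 := List.count_eq_zero.mpr hmem
        rw [hc]
        push_cast
        rw [mul_zero, map_zero, zero_mul, PB_zero, zero_add, mul_one]
    · have h1 : applyL (k :: l) q = PB k (applyL l q) := rfl
      rw [h1, PBp_PB_ne j k hkj, ih, PB_C_mul,
        List.count_cons_of_ne (by simpa using hkj),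
        List.erase_cons_tail (by simpa using hkj)]
      rfl

end BJaux

namespace BJaux
open MvPolynomial
variable {n : ℕ}

lemma foldr_comp_apply {τ : Type*} (L : List (τ → τ)) (x : τ) :
    (L.foldr (· ∘ ·) id) x = L.foldr (fun g y => g y) x := by
  induction L generalizing x with
  | nil => rfl
  | cons g L ih => simp only [List.foldr_cons, Function.comp_apply, ih]

lemma foldr_replicate {τ ι : Type*} (op : ι → τ → τ) (k : ι) (m : ℕ) (x : τ) :
    (List.replicate m k).foldr (fun i y => op i y) x = (op k)^[m] x := by
  induction m with
  | zero => rfl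
  | succ m ih => rw [List.replicate_succ, List.foldr_cons, ih, Function.iterate_succ_apply']

lemma foldr_ofFn_map {ι τ : Type*} {m : ℕ} (f : Fin m → ι) (h : ι → τ → τ) (x : τ) :
    (List.ofFn f).foldr (fun i y => h i y) x
      = (List.ofFn (fun k => h (f k))).foldr (fun g y => g y) x := by
  induction m generalizing x with
  | zero => rfl
  | succ m ih =>
    rw [List.ofFn_succ, List.ofFn_succ, List.foldr_cons, List.foldr_cons, ih]

lemma foldr_pow_join {τ : Type*} (op : Fin n → τ → τ) (φ : Fin n → ℕ) (x : τ) :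
    (List.ofFn (fun k => (op k)^[φ k])).foldr (· ∘ ·) id x
      = ((List.ofFn fun k : Fin n => List.replicate (φ k) k).flatten).foldr
          (fun i y => op i y) x := by
  have h : (fun k : Fin n => (op k)^[φ k])
      = fun k => fun y => (List.replicate (φ k) k).foldr (fun i y => op i y) y := by
    funext k y
    exact (foldr_replicate op k (φ k) y).symm
  rw [foldr_comp_apply, h, List.foldr_flatten]
  exact (foldr_ofFn_map (fun k : Fin n => List.replicate (φ k) k)
    (fun s y => s.foldr (fun i y => op i y) y) x).symm

def Jl (α : Fin n → ℕ) : List (Fin n) := (List.ofFn fun k : Fin n => List.replicate (α k) k).flatten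

lemma count_Jl (α : Fin n → ℕ) (j : Fin n) : (Jl α).count j = α j := by
  classical
  rw [Jl, List.count_flatten, List.map_ofFn, List.sum_ofFn]
  have h : ∀ k : Fin n, (List.count j ∘ fun k : Fin n => List.replicate (α k) k) k
      = if k = j then α k else 0 := by
    intro k
    simp [List.count_replicate]
  rw [Finset.sum_congr rfl fun k _ => h k, Finset.sum_ite_eq']
  simp

lemma bOpL_E (l : List (Fin n)) (p : MvPolynomial (σn n) ℂ) :
    l.foldr (fun k g => bOp k g) (Efun p) = Efun (applyL l p) := by
  induction l with
  | nil => rfl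
  | cons k l ih =>
    rw [List.foldr_cons, ih, bOp_E]
    rfl

lemma bPow_E (α : Fin n → ℕ) (p : MvPolynomial (σn n) ℂ) :
    bPow α (Efun p) = Efun (applyL (Jl α) p) := by
  rw [bPow, foldr_pow_join (fun k => bOp k) α (Efun p)]
  exact bOpL_E (Jl α) p

noncomputable def P0 (β : Fin n → ℕ) : MvPolynomial (σn n) ℂ := ∏ i : Fin n, X (Sum.inl i) ^ β i

lemma eig_eq (α β : Fin n → ℕ) : eigFun α β = Efun (applyL (Jl α) (P0 β)) := by
  rw [eigFun, show (fun z : Fin n → ℂ => (∏ j, z j ^ β j) * gaussFn z) = Efun (P0 β) from ?_,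
    bPow_E]
  funext z
  rw [Efun]
  congr 1
  simp [pe, P0, vmap]

end BJaux

open BJaux MvPolynomial

/-- The functions `f_{α,β} = b^α (z^β exp(-(π/2) Σ |z_i|²))` satisfy
`b_j b_j⁺ f_{α,β} = 4π α_j f_{α,β}`. -/
theorem bj_bjPlus_eigenfunction {n : ℕ} (α β : Fin n → ℕ) (j : Fin n) (z : Fin n → ℂ) :
    bOp j (bPlusOp j (eigFun α β)) z = 4 * (Real.pi : ℂ) * (α j : ℂ) * eigFun α β z := by
  rw [eig_eq α β, bPlus_E, bOp_E]
  have hq : PBp j (P0 β) = 0 := PBp_prod j β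
  have hmain : PB j (PBp j (applyL (Jl α) (P0 β)))
      = C (4 * (Real.pi : ℂ) * (α j : ℂ)) * applyL (Jl α) (P0 β) := by
    rw [PBp_applyL j _ _ hq, count_Jl]
    rcases Nat.eq_zero_or_pos (α j) with h0 | hpos
    · rw [h0]
      push_cast
      rw [mul_zero, map_zero, zero_mul, PB_zero, zero_mul]
    · have hmem : j ∈ Jl α := by
        by_contra hmem
        have hcz := List.count_eq_zero.mpr hmem
        rw [count_Jl] at hcz
        omega
      rw [PB_C_mul, PB_applyL_erase hmem]
  rw [hmain]
  show pe _ z * gaussFn z = _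
  have hpe : pe (C (4 * (Real.pi : ℂ) * (α j : ℂ)) * applyL (Jl α) (P0 β)) z
      = 4 * (Real.pi : ℂ) * (α j : ℂ) * pe (applyL (Jl α) (P0 β)) z := by
    simp [pe]
  rw [hpe]
  unfold Efun
  ring
end
end

section
/- For all multi-indices α, β ∈ ℕ^n, the function f_{α,β} = b^α (z^β exp(−(π/2) Σ_{i=1}^n |z_i|²)) on ℂ^n is an eigenfunction of the model operator 𝓛 = Σ_{j=1}^n b_j b_j^+ with eigenvalue 4π Σ_{i=1}^n α_i, i.e. 𝓛 f_{α,β} = 4π (α_1 + ⋯ + α_n) f_{α,β}. -/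
open MeasureTheory Complex

noncomputable section

variable {n : ℕ}
variable {n : ℕ}

def SM (f : (Fin n → ℂ) → ℂ) : Prop := ContDiff ℝ (⊤ : ℕ∞) f

def pd (v : Fin n → ℂ) (f : (Fin n → ℂ) → ℂ) (z : Fin n → ℂ) : ℂ := fderiv ℝ f z v

theorem SM.diffAt {f : (Fin n → ℂ) → ℂ} (h : SM f) (z) : DifferentiableAt ℝ f z :=
  (h.differentiable (by simp)).differentiableAt

theorem SM.pd {f : (Fin n → ℂ) → ℂ} (h : SM f) (v) : SM (pd v f) :=
  (h.fderiv_right (m := (⊤:ℕ∞)) (by exact_mod_cast le_top)).clm_apply contDiff_const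

theorem SM.mul {f g : (Fin n → ℂ) → ℂ} (hf : SM f) (hg : SM g) : SM (fun z => f z * g z) := ContDiff.mul hf hg
theorem SM.add {f g : (Fin n → ℂ) → ℂ} (hf : SM f) (hg : SM g) : SM (fun z => f z + g z) := ContDiff.add hf hg
theorem SM.constMul {f : (Fin n → ℂ) → ℂ} (c : ℂ) (hf : SM f) : SM (fun z => c * f z) := contDiff_const.mul hf
theorem SM.coord (k : Fin n) : SM (fun z : Fin n → ℂ => z k) :=
  (ContinuousLinearMap.proj k : (Fin n → ℂ) →L[ℝ] ℂ).contDiff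
theorem SM.conjCoord (k : Fin n) : SM (fun z : Fin n → ℂ => (starRingEnd ℂ) (z k)) :=
  Complex.conjCLE.contDiff.comp (SM.coord k)

theorem pd_sym {f : (Fin n → ℂ) → ℂ} (h : SM f) (v w z) : pd v (pd w f) z = pd w (pd v f) z := by
  have hd : ∀ y, HasFDerivAt f (fderiv ℝ f y) y := fun y => (h.diffAt y).hasFDerivAt
  have h2 : DifferentiableAt ℝ (fderiv ℝ f) z :=
    ((h.fderiv_right (m := (⊤:ℕ∞)) (by exact_mod_cast le_top)).differentiable
      (by simp)).differentiableAt
  have hsym := second_derivative_symmetric hd h2.hasFDerivAt v w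
  have e1 : ∀ u : Fin n → ℂ, fderiv ℝ (fun y => fderiv ℝ f y u) z
      = (fderiv ℝ (fderiv ℝ f) z).flip u := by
    intro u
    have := fderiv_clm_apply (c := fderiv ℝ f) (u := fun _ => u) h2 (differentiableAt_const u)
    simpa using this
  show fderiv ℝ (fun y => fderiv ℝ f y w) z v = fderiv ℝ (fun y => fderiv ℝ f y v) z w
  rw [e1 w, e1 v]
  simpa using hsym
variable {n : ℕ}

theorem pd_add {f g : (Fin n → ℂ) → ℂ} (v z) (hf : DifferentiableAt ℝ f z)
    (hg : DifferentiableAt ℝ g z) : pd v (fun y => f y + g y) z = pd v f z + pd v g z := by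
  unfold pd; rw [fderiv_fun_add hf hg]; rfl

theorem pd_const_mul {f : (Fin n → ℂ) → ℂ} (c : ℂ) (v z) (hf : DifferentiableAt ℝ f z) :
    pd v (fun y => c * f y) z = c * pd v f z := by
  unfold pd; rw [fderiv_const_mul hf]; simp

theorem pd_mul {f g : (Fin n → ℂ) → ℂ} (v z) (hf : DifferentiableAt ℝ f z)
    (hg : DifferentiableAt ℝ g z) :
    pd v (fun y => f y * g y) z = pd v f z * g z + f z * pd v g z := by
  unfold pd; rw [fderiv_fun_mul hf hg]; simp [smul_eq_mul]; ring

theorem pd_coord (k : Fin n) (v z) : pd v (fun y : Fin n → ℂ => y k) z = v k := by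
  unfold pd
  rw [show (fun y : Fin n → ℂ => y k) = ⇑(ContinuousLinearMap.proj k : (Fin n → ℂ) →L[ℝ] ℂ) from rfl,
    ContinuousLinearMap.fderiv]
  rfl

theorem pd_conj_coord (k : Fin n) (v z) :
    pd v (fun y : Fin n → ℂ => (starRingEnd ℂ) (y k)) z = (starRingEnd ℂ) (v k) := by
  unfold pd
  rw [show (fun y : Fin n → ℂ => (starRingEnd ℂ) (y k))
      = ⇑((Complex.conjCLE.toContinuousLinearMap).comp
          (ContinuousLinearMap.proj k : (Fin n → ℂ) →L[ℝ] ℂ)) from rfl,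
    ContinuousLinearMap.fderiv]
  rfl

theorem SM.conjMul (k : Fin n) {f : (Fin n → ℂ) → ℂ} (hf : SM f) :
    SM (fun z => (starRingEnd ℂ) (z k) * f z) := ContDiff.mul (SM.conjCoord k) hf
theorem SM.coordMul (k : Fin n) {f : (Fin n → ℂ) → ℂ} (hf : SM f) :
    SM (fun z => z k * f z) := ContDiff.mul (SM.coord k) hf

theorem pd_conjMul {f : (Fin n → ℂ) → ℂ} (k : Fin n) (v z) (hf : SM f) :
    pd v (fun y => (starRingEnd ℂ) (y k) * f y) z
      = (starRingEnd ℂ) (v k) * f z + (starRingEnd ℂ) (z k) * pd v f z := by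
  rw [pd_mul v z ((SM.conjCoord k).diffAt z) (hf.diffAt z), pd_conj_coord]

theorem pd_coordMul {f : (Fin n → ℂ) → ℂ} (k : Fin n) (v z) (hf : SM f) :
    pd v (fun y => y k * f y) z = v k * f z + z k * pd v f z := by
  rw [pd_mul v z ((SM.coord k).diffAt z) (hf.diffAt z), pd_coord]

theorem bOp_eq (k : Fin n) (f : (Fin n → ℂ) → ℂ) :
    bOp k f = fun z => (-1) * pd (Pi.single k 1) f z + Complex.I * pd (Pi.single k Complex.I) f z
      + (Real.pi : ℂ) * ((starRingEnd ℂ) (z k) * f z) := by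
  funext z; simp only [bOp, wirtingerD, pd]; ring

theorem bPlus_eq (j : Fin n) (f : (Fin n → ℂ) → ℂ) :
    bPlusOp j f = fun z => pd (Pi.single j 1) f z + Complex.I * pd (Pi.single j Complex.I) f z
      + (Real.pi : ℂ) * (z j * f z) := by
  funext z; simp only [bPlusOp, wirtingerDBar, pd]; ring

theorem SM.bOp (k : Fin n) {f : (Fin n → ℂ) → ℂ} (hf : SM f) : SM (bOp k f) := by
  rw [bOp_eq]
  exact ContDiff.add (ContDiff.add (SM.constMul _ (hf.pd _)) (SM.constMul _ (hf.pd _)))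
    (SM.constMul _ (SM.conjMul k hf))

theorem SM.bPlusOp (j : Fin n) {f : (Fin n → ℂ) → ℂ} (hf : SM f) : SM (bPlusOp j f) := by
  rw [bPlus_eq]
  exact ContDiff.add (ContDiff.add (hf.pd _) (SM.constMul _ (hf.pd _)))
    (SM.constMul _ (SM.coordMul j hf))

theorem smTwo (k : Fin n) {f : (Fin n → ℂ) → ℂ} (hf : SM f) :
    SM (fun z => (-1 : ℂ) * pd (Pi.single k 1) f z + Complex.I * pd (Pi.single k Complex.I) f z) :=
  SM.add (SM.constMul _ (hf.pd _)) (SM.constMul _ (hf.pd _))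

theorem pd_bOp {f : (Fin n → ℂ) → ℂ} (k : Fin n) (v z) (hf : SM f) :
    pd v (bOp k f) z = (-1) * pd v (pd (Pi.single k 1) f) z
      + Complex.I * pd v (pd (Pi.single k Complex.I) f) z
      + (Real.pi : ℂ) * ((starRingEnd ℂ) (v k) * f z + (starRingEnd ℂ) (z k) * pd v f z) := by
  rw [bOp_eq,
    pd_add v z ((smTwo k hf).diffAt z) ((SM.constMul _ (SM.conjMul k hf)).diffAt z),
    pd_add v z ((SM.constMul _ (hf.pd _)).diffAt z) ((SM.constMul _ (hf.pd _)).diffAt z),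
    pd_const_mul _ v z ((hf.pd _).diffAt z), pd_const_mul _ v z ((hf.pd _).diffAt z),
    pd_const_mul _ v z ((SM.conjMul k hf).diffAt z), pd_conjMul k v z hf]

theorem pd_bPlus {f : (Fin n → ℂ) → ℂ} (j : Fin n) (v z) (hf : SM f) :
    pd v (bPlusOp j f) z = pd v (pd (Pi.single j 1) f) z
      + Complex.I * pd v (pd (Pi.single j Complex.I) f) z
      + (Real.pi : ℂ) * (v j * f z + z j * pd v f z) := by
  have h2 : SM (fun z => pd (Pi.single j 1) f z + Complex.I * pd (Pi.single j Complex.I) f z) :=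
    SM.add (hf.pd _) (SM.constMul _ (hf.pd _))
  rw [bPlus_eq,
    pd_add v z (h2.diffAt z) ((SM.constMul _ (SM.coordMul j hf)).diffAt z),
    pd_add v z ((hf.pd _).diffAt z) ((SM.constMul _ (hf.pd _)).diffAt z),
    pd_const_mul _ v z ((hf.pd _).diffAt z),
    pd_const_mul _ v z ((SM.coordMul j hf).diffAt z), pd_coordMul j v z hf]

theorem bPlus_bOp_comm {f : (Fin n → ℂ) → ℂ} (j k : Fin n) (hf : SM f) :
    bPlusOp j (bOp k f) = fun z => bOp k (bPlusOp j f) z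
      + (if j = k then 4 * (Real.pi : ℂ) * f z else 0) := by
  funext z
  rw [bPlus_eq j (bOp k f)]
  simp only []
  rw [pd_bOp k _ z hf, pd_bOp k _ z hf, bOp_eq k (bPlusOp j f)]
  simp only []
  rw [pd_bPlus j _ z hf, pd_bPlus j _ z hf, bOp_eq k f, bPlus_eq j f]
  simp only []
  rw [
    pd_sym hf (Pi.single j 1) (Pi.single k 1),
    pd_sym hf (Pi.single j 1) (Pi.single k Complex.I),
    pd_sym hf (Pi.single j Complex.I) (Pi.single k 1),
    pd_sym hf (Pi.single j Complex.I) (Pi.single k Complex.I)]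
  by_cases h : j = k
  · subst h
    simp only [Pi.single_apply, if_pos rfl, apply_ite (starRingEnd ℂ), map_one, Complex.conj_I, map_zero, if_true]
    ring_nf
    simp [Complex.I_sq]
    ring
  · have h' : k ≠ j := fun e => h e.symm
    simp only [Pi.single_apply, if_neg h, if_neg h', map_zero, if_false]
    ring_nf

theorem pd_sum {g : Fin n → ((Fin n → ℂ) → ℂ)} (v z) (h : ∀ i, DifferentiableAt ℝ (g i) z) :
    pd v (fun y => ∑ i, g i y) z = ∑ i, pd v (g i) z := by
  unfold pd; rw [fderiv_fun_sum (fun i _ => h i)]; simp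

theorem gauss_eq : gaussFn (n := n) =
    fun z => Complex.exp (-((Real.pi : ℂ) / 2) * ∑ i, z i * (starRingEnd ℂ) (z i)) := by
  funext z; simp [gaussFn, Complex.mul_conj]

theorem SM.gaussArg : SM (fun z : Fin n → ℂ => -((Real.pi : ℂ) / 2) * ∑ i, z i * (starRingEnd ℂ) (z i)) :=
  SM.constMul _ (ContDiff.sum fun i _ => ContDiff.mul (SM.coord i) (SM.conjCoord i))

theorem SM.gauss : SM (gaussFn (n := n)) := by
  rw [gauss_eq]
  exact ((Complex.contDiff_exp (𝕜 := ℂ)).restrict_scalars ℝ).comp SM.gaussArg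

theorem pd_exp_comp {φ : (Fin n → ℂ) → ℂ} (v z) (hφ : SM φ) :
    pd v (fun y => Complex.exp (φ y)) z = Complex.exp (φ z) * pd v φ z := by
  have h1 : HasFDerivAt φ (fderiv ℝ φ z) z := (hφ.diffAt z).hasFDerivAt
  have h2 := (Complex.hasDerivAt_exp (φ z)).hasFDerivAt
  have h3 := (h2.restrictScalars ℝ).comp z h1
  have h3' : HasFDerivAt (fun y => Complex.exp (φ y))
      ((ContinuousLinearMap.restrictScalars ℝ
        (ContinuousLinearMap.smulRight 1 (Complex.exp (φ z)))).comp (fderiv ℝ φ z)) z := h3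
  unfold pd
  rw [h3'.fderiv]
  simp [mul_comm]

theorem pd_gauss (v z : Fin n → ℂ) :
    pd v gaussFn z = -((Real.pi : ℂ) / 2) *
      (∑ i, (v i * (starRingEnd ℂ) (z i) + z i * (starRingEnd ℂ) (v i))) * gaussFn z := by
  have hs : SM (fun y : Fin n → ℂ => ∑ i, y i * (starRingEnd ℂ) (y i)) :=
    ContDiff.sum fun i _ => ContDiff.mul (SM.coord i) (SM.conjCoord i)
  have hi : ∀ i : Fin n, SM (fun y : Fin n → ℂ => y i * (starRingEnd ℂ) (y i)) :=
    fun i => ContDiff.mul (SM.coord i) (SM.conjCoord i)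
  rw [gauss_eq, pd_exp_comp v z SM.gaussArg,
    pd_const_mul _ v z (hs.diffAt z),
    pd_sum v z (fun i => (hi i).diffAt z)]
  have : ∀ i, pd v (fun y => y i * (starRingEnd ℂ) (y i)) z
      = v i * (starRingEnd ℂ) (z i) + z i * (starRingEnd ℂ) (v i) := by
    intro i
    rw [pd_mul v z ((SM.coord i).diffAt z) ((SM.conjCoord i).diffAt z), pd_coord, pd_conj_coord]
  simp only [this]
  ring

theorem sum_single_pair (j : Fin n) (w : ℂ) (z : Fin n → ℂ) :
    ∑ i, ((Pi.single j w : Fin n → ℂ) i * (starRingEnd ℂ) (z i) + z i * (starRingEnd ℂ) ((Pi.single j w : Fin n → ℂ) i))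
      = w * (starRingEnd ℂ) (z j) + z j * (starRingEnd ℂ) w := by
  rw [Finset.sum_add_distrib]
  congr 1
  · rw [Finset.sum_eq_single j]
    · simp
    · intro i _ hij; simp [Pi.single_apply, hij]
    · simp
  · rw [Finset.sum_eq_single j]
    · simp
    · intro i _ hij; simp [Pi.single_apply, hij]
    · simp

theorem bOp_bOp_comm {f : (Fin n → ℂ) → ℂ} (j k : Fin n) (hf : SM f) :
    bOp j (bOp k f) = bOp k (bOp j f) := by
  funext z
  rw [bOp_eq j (bOp k f)]
  simp only []
  rw [pd_bOp k _ z hf, pd_bOp k _ z hf, bOp_eq k (bOp j f)]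
  simp only []
  rw [pd_bOp j _ z hf, pd_bOp j _ z hf, bOp_eq k f, bOp_eq j f]
  simp only []
  rw [pd_sym hf (Pi.single j 1) (Pi.single k 1),
    pd_sym hf (Pi.single j 1) (Pi.single k Complex.I),
    pd_sym hf (Pi.single j Complex.I) (Pi.single k 1),
    pd_sym hf (Pi.single j Complex.I) (Pi.single k Complex.I)]
  by_cases h : j = k
  · subst h; ring
  · have h' : k ≠ j := fun e => h e.symm
    simp only [Pi.single_apply, if_neg h, if_neg h', map_zero]
    ring

theorem SM.mon (β : Fin n → ℕ) : SM (fun z : Fin n → ℂ => ∏ j, z j ^ β j) := by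
  classical
  have : ∀ s : Finset (Fin n), SM (fun z : Fin n → ℂ => ∏ j ∈ s, z j ^ β j) := by
    intro s
    induction s using Finset.induction_on with
    | empty => simpa [SM] using contDiff_const
    | insert _ _ hns ih =>
        rename_i a s'
        have := ContDiff.mul ((SM.coord a).pow (β a)) ih
        simpa [Finset.prod_insert hns, SM] using this
  exact this Finset.univ

theorem mon_holo (β : Fin n → ℕ) : Differentiable ℂ (fun z : Fin n → ℂ => ∏ j, z j ^ β j) := by
  classical
  have : ∀ s : Finset (Fin n), Differentiable ℂ (fun z : Fin n → ℂ => ∏ j ∈ s, z j ^ β j) := by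
    intro s
    induction s using Finset.induction_on with
    | empty => simpa using differentiable_const (1 : ℂ)
    | insert _ _ hns ih =>
        rename_i a s'
        have hc : Differentiable ℂ (fun z : Fin n → ℂ => z a) :=
          (ContinuousLinearMap.proj a : (Fin n → ℂ) →L[ℂ] ℂ).differentiable
        have := (hc.fun_pow (β a)).fun_mul ih
        simpa [Finset.prod_insert hns] using this
  exact this Finset.univ

theorem single_I_eq (j : Fin n) :
    (Pi.single j Complex.I : Fin n → ℂ) = Complex.I • (Pi.single j 1 : Fin n → ℂ) := by
  funext i
  by_cases h : i = j <;> simp [Pi.single_apply, h]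

theorem mon_lin (β : Fin n → ℕ) (j : Fin n) (z : Fin n → ℂ) :
    pd (Pi.single j Complex.I) (fun y : Fin n → ℂ => ∏ k, y k ^ β k) z
      = Complex.I * pd (Pi.single j 1) (fun y : Fin n → ℂ => ∏ k, y k ^ β k) z := by
  have hd : DifferentiableAt ℂ (fun y : Fin n → ℂ => ∏ k, y k ^ β k) z :=
    (mon_holo β z)
  unfold pd
  rw [hd.fderiv_restrictScalars ℝ, single_I_eq]
  simp

theorem bPlus_ground (β : Fin n → ℕ) (j : Fin n) :
    bPlusOp j (fun z => (∏ k, z k ^ β k) * gaussFn z) = fun _ => (0 : ℂ) := by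
  funext z
  rw [bPlus_eq]
  simp only []
  rw [pd_mul _ z ((SM.mon β).diffAt z) (SM.gauss.diffAt z),
    pd_mul _ z ((SM.mon β).diffAt z) (SM.gauss.diffAt z),
    pd_gauss, pd_gauss, mon_lin, sum_single_pair, sum_single_pair]
  simp only [map_one, Complex.conj_I, one_mul, mul_one]
  linear_combination (pd (Pi.single j 1) (fun y : Fin n → ℂ => ∏ k, y k ^ β k) z * gaussFn z
    - (∏ k, z k ^ β k) * ((Real.pi : ℂ)/2 * ((starRingEnd ℂ) (z j) - z j)) * gaussFn z)
    * Complex.I_mul_I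

theorem bOp_add {f g : (Fin n → ℂ) → ℂ} (k : Fin n) (hf : SM f) (hg : SM g) :
    bOp k (fun z => f z + g z) = fun z => bOp k f z + bOp k g z := by
  funext z
  rw [bOp_eq k (fun z => f z + g z), bOp_eq k f, bOp_eq k g]
  simp only []
  rw [pd_add _ z (hf.diffAt z) (hg.diffAt z), pd_add _ z (hf.diffAt z) (hg.diffAt z)]
  ring

theorem bOp_const_mul {f : (Fin n → ℂ) → ℂ} (c : ℂ) (k : Fin n) (hf : SM f) :
    bOp k (fun z => c * f z) = fun z => c * bOp k f z := by
  funext z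
  rw [bOp_eq k (fun z => c * f z), bOp_eq k f]
  simp only []
  rw [pd_const_mul _ _ z (hf.diffAt z), pd_const_mul _ _ z (hf.diffAt z)]
  ring

theorem bOp_zero (k : Fin n) : bOp k (fun _ => (0 : ℂ)) = fun _ => (0 : ℂ) := by
  funext z
  simp [bOp, wirtingerD]

theorem smIter {f : (Fin n → ℂ) → ℂ} (k : Fin n) (m : ℕ) (hf : SM f) : SM ((bOp k)^[m] f) := by
  induction m with
  | zero => simpa using hf
  | succ m ih => rw [Function.iterate_succ_apply']; exact SM.bOp k ih

theorem iter_zero (k : Fin n) (m : ℕ) : (bOp k)^[m] (fun _ => (0 : ℂ)) = fun _ => (0 : ℂ) :=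
  Function.iterate_fixed (bOp_zero k) m

theorem iter_const_mul {f : (Fin n → ℂ) → ℂ} (c : ℂ) (k : Fin n) (m : ℕ) (hf : SM f) :
    (bOp k)^[m] (fun z => c * f z) = fun z => c * (bOp k)^[m] f z := by
  induction m generalizing f with
  | zero => simp
  | succ m ih =>
      rw [Function.iterate_succ_apply, Function.iterate_succ_apply,
        bOp_const_mul c k hf, ih (SM.bOp k hf)]

theorem iter_add {f g : (Fin n → ℂ) → ℂ} (k : Fin n) (m : ℕ) (hf : SM f) (hg : SM g) :
    (bOp k)^[m] (fun z => f z + g z) = fun z => (bOp k)^[m] f z + (bOp k)^[m] g z := by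
  induction m generalizing f g with
  | zero => simp
  | succ m ih =>
      rw [Function.iterate_succ_apply, Function.iterate_succ_apply, Function.iterate_succ_apply,
        bOp_add k hf hg, ih (SM.bOp k hf) (SM.bOp k hg)]

theorem bPlus_iter {f : (Fin n → ℂ) → ℂ} (j k : Fin n) (m : ℕ) (hf : SM f) :
    bPlusOp j ((bOp k)^[m] f) = fun z => (bOp k)^[m] (bPlusOp j f) z
      + (if j = k then (4 * (Real.pi : ℂ) * m) * (bOp k)^[m - 1] f z else 0) := by
  induction m generalizing f with
  | zero => funext z; simp
  | succ m ih =>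
      rw [Function.iterate_succ_apply, ih (SM.bOp k hf), bPlus_bOp_comm j k hf]
      by_cases h : j = k
      · subst h
        simp only [eq_self_iff_true, if_true]
        rw [iter_add j m (SM.bOp j (SM.bPlusOp j hf)) (SM.constMul _ hf),
          iter_const_mul _ j m hf]
        funext z
        have h2 : (4 * (Real.pi : ℂ) * m) * (bOp j)^[m - 1] (bOp j f) z
            = (4 * (Real.pi : ℂ) * m) * (bOp j)^[m] f z := by
          cases m with
          | zero => simp
          | succ m => rw [Nat.add_sub_cancel, ← Function.iterate_succ_apply]
        rw [h2, ← Function.iterate_succ_apply]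
        simp only [Nat.add_sub_cancel, eq_self_iff_true, if_true]
        push_cast
        ring
      · simp only [if_neg h, add_zero]
        funext z
        show (bOp k)^[m] (bOp k (bPlusOp j f)) z = _
        rw [← Function.iterate_succ_apply]

theorem bOp_iter_comm {f : (Fin n → ℂ) → ℂ} (j k : Fin n) (m : ℕ) (hf : SM f) :
    bOp j ((bOp k)^[m] f) = (bOp k)^[m] (bOp j f) := by
  induction m generalizing f with
  | zero => simp
  | succ m ih =>
      rw [Function.iterate_succ_apply, ih (SM.bOp k hf), bOp_bOp_comm j k hf,
        ← Function.iterate_succ_apply]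

def cOp (γ : Fin n → ℕ) (l : List (Fin n)) (g : (Fin n → ℂ) → ℂ) : (Fin n → ℂ) → ℂ :=
  l.foldr (fun k h => (bOp k)^[γ k] h) g

theorem smCOp {g : (Fin n → ℂ) → ℂ} (γ : Fin n → ℕ) (l : List (Fin n)) (hg : SM g) :
    SM (cOp γ l g) := by
  induction l with
  | nil => exact hg
  | cons k t ih => exact smIter k (γ k) ih

theorem cOp_congr {g : (Fin n → ℂ) → ℂ} {γ γ' : Fin n → ℕ} (l : List (Fin n))
    (h : ∀ k ∈ l, γ k = γ' k) : cOp γ l g = cOp γ' l g := by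
  induction l with
  | nil => rfl
  | cons k t ih =>
      show (bOp k)^[γ k] (cOp γ t g) = (bOp k)^[γ' k] (cOp γ' t g)
      rw [h k (List.mem_cons_self : k ∈ k :: t), ih (fun i hi => h i (List.mem_cons_of_mem k hi))]

theorem bPlus_cOp_notMem {g : (Fin n → ℂ) → ℂ} {γ : Fin n → ℕ} {l : List (Fin n)} {j : Fin n}
    (hj : j ∉ l) (hg : SM g) (h0 : bPlusOp j g = fun _ => 0) :
    bPlusOp j (cOp γ l g) = fun _ => (0 : ℂ) := by
  induction l with
  | nil => exact h0
  | cons k t ih =>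
      have hjk : j ≠ k := fun e => hj (e ▸ (List.mem_cons_self : k ∈ k :: t))
      have hjt : j ∉ t := fun e => hj (List.mem_cons_of_mem k e)
      show bPlusOp j ((bOp k)^[γ k] (cOp γ t g)) = fun _ => (0 : ℂ)
      rw [bPlus_iter j k (γ k) (smCOp γ t hg), ih hjt]
      funext z
      simp only [if_neg hjk, add_zero, iter_zero]

theorem bPlus_cOp_main {g : (Fin n → ℂ) → ℂ} {γ : Fin n → ℕ} {l : List (Fin n)} (j : Fin n)
    (hl : l.Nodup) (hg : SM g) (h0 : ∀ i, bPlusOp i g = fun _ => 0) :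
    bPlusOp j (cOp γ l g) = fun z =>
      (if j ∈ l then (4 * (Real.pi : ℂ) * (γ j)) else 0)
        * cOp (Function.update γ j (γ j - 1)) l g z := by
  induction l generalizing γ with
  | nil => rw [show cOp γ [] g = g from rfl, h0 j]; funext z; simp
  | cons k t ih =>
      have hkt : k ∉ t := (List.nodup_cons.mp hl).1
      have hnt : t.Nodup := (List.nodup_cons.mp hl).2
      show bPlusOp j ((bOp k)^[γ k] (cOp γ t g)) = _
      by_cases h : j = k
      · subst h
        have hjt : j ∉ t := hkt
        rw [bPlus_iter j j (γ j) (smCOp γ t hg), bPlus_cOp_notMem hjt hg (h0 j), iter_zero]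
        funext z
        have e1 : cOp (Function.update γ j (γ j - 1)) t g = cOp γ t g :=
          cOp_congr t (fun i hi => Function.update_of_ne (by rintro rfl; exact hjt hi) _ γ)
        have e2 : cOp (Function.update γ j (γ j - 1)) (j :: t) g
            = (bOp j)^[γ j - 1] (cOp γ t g) := by
          show (bOp j)^[Function.update γ j (γ j - 1) j] (cOp (Function.update γ j (γ j - 1)) t g) = _
          rw [Function.update_self, e1]
        rw [e2]
        simp
      · have hjmem : (j ∈ k :: t) ↔ (j ∈ t) := by
          simp [List.mem_cons, h]
        rw [bPlus_iter j k (γ k) (smCOp γ t hg), ih hnt]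
        funext z
        rw [iter_const_mul _ k (γ k) (smCOp _ t hg)]
        have e3 : cOp (Function.update γ j (γ j - 1)) (k :: t) g
            = (bOp k)^[γ k] (cOp (Function.update γ j (γ j - 1)) t g) := by
          show (bOp k)^[Function.update γ j (γ j - 1) k] _ = _
          rw [Function.update_of_ne (fun e => h e.symm) _ γ]
          rfl
        rw [e3]
        simp only [if_neg h, add_zero, hjmem]

theorem bOp_cOp_main {g : (Fin n → ℂ) → ℂ} {γ : Fin n → ℕ} {l : List (Fin n)} (j : Fin n)
    (hl : l.Nodup) (hj : j ∈ l) (hg : SM g) :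
    bOp j (cOp γ l g) = cOp (Function.update γ j (γ j + 1)) l g := by
  induction l generalizing γ with
  | nil => exact absurd hj List.not_mem_nil
  | cons k t ih =>
      have hkt : k ∉ t := (List.nodup_cons.mp hl).1
      have hnt : t.Nodup := (List.nodup_cons.mp hl).2
      show bOp j ((bOp k)^[γ k] (cOp γ t g)) = _
      by_cases h : j = k
      · subst h
        have hjt : j ∉ t := hkt
        have e1 : cOp (Function.update γ j (γ j + 1)) t g = cOp γ t g :=
          cOp_congr t (fun i hi => Function.update_of_ne (by rintro rfl; exact hjt hi) _ γ)
        have e2 : cOp (Function.update γ j (γ j + 1)) (j :: t) g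
            = (bOp j)^[γ j + 1] (cOp γ t g) := by
          show (bOp j)^[Function.update γ j (γ j + 1) j] (cOp (Function.update γ j (γ j + 1)) t g) = _
          rw [Function.update_self, e1]
        rw [e2, Function.iterate_succ_apply']
      · have hjt : j ∈ t := by
          rcases List.mem_cons.mp hj with h' | h'
          · exact absurd h' h
          · exact h'
        rw [bOp_iter_comm j k (γ k) (smCOp γ t hg), ih hnt hjt]
        show _ = (bOp k)^[Function.update γ j (γ j + 1) k] (cOp (Function.update γ j (γ j + 1)) t g)
        rw [Function.update_of_ne (fun e => h e.symm) _ γ]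

theorem foldr_comp_apply {σ : Type*} (L : List (σ → σ)) (x : σ) :
    (L.foldr (· ∘ ·) id) x = L.foldr (fun T a => T a) x := by
  induction L with
  | nil => rfl
  | cons T t ih => show T ((t.foldr (· ∘ ·) id) x) = T (t.foldr (fun T a => T a) x); rw [ih]


/-- The functions `f_{α,β} = b^α (z^β exp(-(π/2) Σ |z_i|²))` are
eigenfunctions of the model operator `𝓛 = Σ_j b_j b_j⁺` with eigenvalue `4π Σ α_i`. -/
theorem modelOp_eigenfunction {n : ℕ} (α β : Fin n → ℕ) (z : Fin n → ℂ) :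
    (∑ j, bOp j (bPlusOp j (eigFun α β)) z)
      = 4 * (Real.pi : ℂ) * ((∑ i, α i : ℕ) : ℂ) * eigFun α β z := by
  classical
  set g : (Fin n → ℂ) → ℂ := fun z => (∏ k, z k ^ β k) * gaussFn z with hgdef
  have hg : SM g := ContDiff.mul (SM.mon β) SM.gauss
  have h0 : ∀ i, bPlusOp i g = fun _ => 0 := fun i => bPlus_ground β i
  have hE : eigFun α β = cOp α (List.finRange n) g := by
    unfold eigFun bPow
    rw [List.ofFn_eq_map]
    funext w
    rw [foldr_comp_apply, List.foldr_map]
    rfl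
  rw [hE]
  have key : ∀ j : Fin n, bOp j (bPlusOp j (cOp α (List.finRange n) g))
      = fun w => 4 * (Real.pi : ℂ) * (α j : ℂ) * cOp α (List.finRange n) g w := by
    intro j
    rw [bPlus_cOp_main j (List.nodup_finRange n) hg h0]
    simp only [List.mem_finRange, if_true]
    set γ' := Function.update α j (α j - 1) with hγ'
    rw [bOp_const_mul _ j (smCOp γ' _ hg),
      bOp_cOp_main j (List.nodup_finRange n) (List.mem_finRange j) hg]
    cases hα : α j with
    | zero => funext w; simp [hα]
    | succ m =>
        have hu : Function.update γ' j (γ' j + 1) = α := by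
          rw [hγ', Function.update_idem, Function.update_self, hα]
          have : m + 1 - 1 + 1 = m + 1 := rfl
          rw [this, ← hα, Function.update_eq_self]
        rw [hu]
  simp only [key]
  have h4 : ∑ j, 4 * (Real.pi : ℂ) * (α j : ℂ) = 4 * (Real.pi : ℂ) * ((∑ i, α i : ℕ) : ℂ) := by
    push_cast
    rw [Finset.mul_sum]
  rw [← Finset.sum_mul, h4]
end
end

section
/- For every 1 ≤ i ≤ n and all z, z' ∈ ℂ^n, ∫_{ℂ^n} 𝒫(z, w) · w̄_i · 𝒫(w, z') dW = z̄'_i · 𝒫(z, z'). -/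
open MeasureTheory Complex

noncomputable section

section BKAux
open Real Filter

noncomputable def bkG (e : ℂ) (x : ℝ) : ℂ := cexp (-(Real.pi:ℂ) * (x:ℂ)^2 + e * (x:ℂ))

lemma bkGauss1 (e : ℂ) : ∫ x : ℝ, bkG e x = cexp (e^2 / (4*Real.pi)) := by
  have hb : (-(Real.pi:ℂ)).re < 0 := by simp [Real.pi_pos]
  have hπ : (Real.pi:ℂ) ≠ 0 := by exact_mod_cast Real.pi_ne_zero
  have h := integral_cexp_quadratic hb e 0
  simp only [add_zero, zero_sub] at h
  unfold bkG
  rw [h, neg_neg, div_self hπ, one_cpow, one_mul, mul_neg, div_neg, neg_neg]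

lemma bkInt1 (e : ℂ) : Integrable (bkG e) := by
  have h := integrable_cexp_quadratic (b := (Real.pi:ℂ)) (by simp [Real.pi_pos]) e 0
  have h2 : bkG e = fun x : ℝ => cexp (-(Real.pi:ℂ) * (x:ℂ)^2 + e*(x:ℂ) + 0) := by
    funext x; rw [bkG, add_zero]
  rw [h2]; exact h

lemma bkInt2 (e : ℂ) : Integrable (fun x : ℝ => (x:ℂ) * bkG e x) := by
  have h2 : Integrable (fun x : ℝ => (x:ℂ) * cexp (-(Real.pi/2 : ℂ) * (x:ℂ)^2)) :=
    integrable_mul_cexp_neg_mul_sq (by simp [Real.pi_pos])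
  refine Integrable.mono' (g := fun x : ℝ =>
      Real.exp (e.re^2 / (2*Real.pi)) * ‖(x:ℂ) * cexp (-(Real.pi/2 : ℂ) * (x:ℂ)^2)‖)
    (h2.norm.const_mul _) ?_ ?_
  · apply Continuous.aestronglyMeasurable
    exact continuous_ofReal.mul (Complex.continuous_exp.comp (by continuity))
  · filter_upwards with x
    unfold bkG
    simp only [norm_mul, Complex.norm_exp]
    have h1 : (-(Real.pi:ℂ) * (x:ℂ)^2 + e * x).re = -Real.pi * x^2 + e.re * x := by
      simp [Complex.add_re, Complex.mul_re, ← Complex.ofReal_pow]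
    have h2 : (-(Real.pi/2 : ℂ) * (x:ℂ)^2).re = -(Real.pi/2) * x^2 := by
      simp [Complex.mul_re, ← Complex.ofReal_pow]
    rw [h1, h2, ← mul_assoc, mul_comm (Real.exp _), mul_assoc, ← Real.exp_add]
    apply mul_le_mul_of_nonneg_left _ (norm_nonneg _)
    apply Real.exp_le_exp.2
    have hd : e.re^2/(2*Real.pi)*(2*Real.pi) = e.re^2 := div_mul_cancel₀ _ (by positivity)
    nlinarith [sq_nonneg (Real.pi*x - e.re), Real.pi_pos, hd]

lemma bkQuadTop (r : ℝ) : Tendsto (fun x : ℝ => -Real.pi*x^2 + r*x) atTop atBot := by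
  have h : (fun x : ℝ => -Real.pi*x^2 + r*x) = fun x : ℝ => x * (-Real.pi*x + r) := by
    funext x; ring
  rw [h]
  have h0 : Tendsto (fun x : ℝ => -Real.pi * x) atTop atBot := by
    simpa using tendsto_id.const_mul_atTop_of_neg (neg_lt_zero.mpr Real.pi_pos)
  exact tendsto_id.atTop_mul_atBot₀ (tendsto_atBot_add_const_right _ r h0)

lemma bkQuadBot (r : ℝ) : Tendsto (fun x : ℝ => -Real.pi*x^2 + r*x) atBot atBot := by
  have h : (fun x : ℝ => -Real.pi*x^2 + r*x) = fun x : ℝ => x * (-Real.pi*x + r) := by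
    funext x; ring
  rw [h]
  have h0 : Tendsto (fun x : ℝ => -Real.pi * x) atBot atTop := by
    simpa using tendsto_id.const_mul_atBot_of_neg (neg_lt_zero.mpr Real.pi_pos)
  exact tendsto_id.atBot_mul_atTop₀ (tendsto_atTop_add_const_right _ r h0)

lemma bkFtend (e : ℂ) (l : Filter ℝ) (hl : Tendsto (fun x : ℝ => -Real.pi*x^2 + e.re*x) l atBot) :
    Tendsto (bkG e) l (nhds 0) := by
  rw [tendsto_zero_iff_norm_tendsto_zero]
  have h : ∀ x : ℝ, ‖bkG e x‖ = Real.exp (-Real.pi*x^2 + e.re*x) := by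
    intro x
    rw [bkG, Complex.norm_exp]
    congr 1
    simp [Complex.add_re, Complex.mul_re, ← Complex.ofReal_pow]
  simp_rw [h]
  exact Real.tendsto_exp_atBot.comp hl

lemma bkGauss2 (e : ℂ) :
    ∫ x : ℝ, (x:ℂ) * bkG e x = e/(2*Real.pi) * cexp (e^2 / (4*Real.pi)) := by
  have hπ : (Real.pi:ℂ) ≠ 0 := by exact_mod_cast Real.pi_ne_zero
  have hderiv : ∀ x : ℝ, HasDerivAt (bkG e) ((-2*Real.pi*x+e) * bkG e x) x := by
    intro x
    have hx : HasDerivAt (fun x : ℝ => (x:ℂ)) 1 x := Complex.ofRealCLM.hasDerivAt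
    have hsq : HasDerivAt (fun x : ℝ => (x:ℂ) * (x:ℂ)) (1 * (x:ℂ) + (x:ℂ) * 1) x := hx.mul hx
    have ha : HasDerivAt (fun x : ℝ => -(Real.pi:ℂ) * ((x:ℂ) * (x:ℂ)))
        (-(Real.pi:ℂ) * (1 * (x:ℂ) + (x:ℂ) * 1)) x := hsq.const_mul _
    have hb : HasDerivAt (fun x : ℝ => e * (x:ℂ)) (e * 1) x := hx.const_mul e
    have h1 : HasDerivAt (fun x : ℝ => -(Real.pi:ℂ) * ((x:ℂ) * (x:ℂ)) + e * (x:ℂ))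
        (-2*Real.pi*x+e) x := by
      exact (ha.add hb).congr_deriv (by ring)
    have heq : (fun x : ℝ => -(Real.pi:ℂ) * ((x:ℂ) * (x:ℂ)) + e * (x:ℂ))
        = fun x : ℝ => -(Real.pi:ℂ) * (x:ℂ)^2 + e * (x:ℂ) := by
      funext y; ring
    rw [heq] at h1
    have h2 := h1.cexp
    rw [mul_comm] at h2
    exact h2
  have hint : Integrable (fun x : ℝ => (-2*(Real.pi:ℂ)*x+e) * bkG e x) := by
    have h : (fun x : ℝ => (-2*(Real.pi:ℂ)*x+e) * bkG e x)
        = fun x : ℝ => (-2*(Real.pi:ℂ)) * ((x:ℂ) * bkG e x) + e * bkG e x := by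
      funext x; ring
    rw [h]
    exact ((bkInt2 e).const_mul _).add ((bkInt1 e).const_mul e)
  have hz : ∫ x : ℝ, (-2*(Real.pi:ℂ)*x+e) * bkG e x = 0 := by
    have := MeasureTheory.integral_of_hasDerivAt_of_tendsto hderiv hint
      (bkFtend e atBot (bkQuadBot e.re)) (bkFtend e atTop (bkQuadTop e.re))
    simpa using this
  have hsplit : ∫ x : ℝ, (-2*(Real.pi:ℂ)*x+e) * bkG e x
      = (-2*(Real.pi:ℂ)) * (∫ x : ℝ, (x:ℂ) * bkG e x) + e * ∫ x : ℝ, bkG e x := by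
    calc ∫ x : ℝ, (-2*(Real.pi:ℂ)*x+e) * bkG e x
        = ∫ x : ℝ, ((-2*(Real.pi:ℂ)) * ((x:ℂ) * bkG e x) + e * bkG e x) := by
          congr 1; funext x; ring
      _ = (∫ x : ℝ, (-2*(Real.pi:ℂ)) * ((x:ℂ) * bkG e x)) + ∫ x : ℝ, e * bkG e x :=
          integral_add ((bkInt2 e).const_mul _) ((bkInt1 e).const_mul e)
      _ = _ := by rw [integral_const_mul, integral_const_mul]
  rw [hsplit, bkGauss1] at hz
  rw [div_mul_eq_mul_div, eq_div_iff (by simp [hπ] : (2*(Real.pi:ℂ)) ≠ 0)]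
  linear_combination -hz

lemma bkTransport (f : ℂ → ℂ) :
    ∫ w : ℂ, f w = ∫ p : ℝ × ℝ, f (p.1 + p.2 * I) := by
  rw [← (Complex.volume_preserving_equiv_real_prod.symm).integral_comp
    Complex.measurableEquivRealProd.symm.measurableEmbedding]
  congr 1
  funext p
  congr 1
  simp [Complex.measurableEquivRealProd, Complex.ext_iff]

lemma bkExpand1 (c d : ℂ) (p : ℝ × ℝ) :
    cexp (-(Real.pi:ℂ) * (Complex.normSq ((p.1:ℂ) + (p.2:ℂ) * I) : ℂ)
        + c * (starRingEnd ℂ) ((p.1:ℂ) + (p.2:ℂ) * I) + d * ((p.1:ℂ) + (p.2:ℂ) * I))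
      = bkG (c+d) p.1 * bkG ((d-c)*I) p.2 := by
  rw [bkG, bkG, ← Complex.exp_add]
  congr 1
  have h1 : ((Complex.normSq ((p.1:ℂ) + (p.2:ℂ) * I) : ℝ) : ℂ)
      = (p.1:ℂ)^2 + (p.2:ℂ)^2 := by
    rw [Complex.normSq_apply]
    simp [Complex.add_re, Complex.add_im, Complex.mul_re, Complex.mul_im]
    push_cast
    ring
  rw [h1, map_add, map_mul, Complex.conj_ofReal, Complex.conj_ofReal, Complex.conj_I]
  ring

lemma bkGaussC (c d : ℂ) :
    ∫ w : ℂ, cexp (-(Real.pi:ℂ) * (Complex.normSq w : ℂ)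
        + c * (starRingEnd ℂ) w + d * w)
      = cexp (c * d / Real.pi) := by
  have hπ : (Real.pi:ℂ) ≠ 0 := by exact_mod_cast Real.pi_ne_zero
  rw [bkTransport]
  simp_rw [bkExpand1 c d]
  rw [MeasureTheory.Measure.volume_eq_prod, integral_prod_mul, bkGauss1, bkGauss1, ← Complex.exp_add]
  congr 1
  field_simp
  ring_nf
  rw [Complex.I_sq]
  ring

lemma bkGaussC' (c d : ℂ) :
    ∫ w : ℂ, (starRingEnd ℂ) w * cexp (-(Real.pi:ℂ) * (Complex.normSq w : ℂ)
        + c * (starRingEnd ℂ) w + d * w)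
      = d / Real.pi * cexp (c * d / Real.pi) := by
  have hπ : (Real.pi:ℂ) ≠ 0 := by exact_mod_cast Real.pi_ne_zero
  rw [bkTransport]
  have hexp : ∀ p : ℝ × ℝ,
      (starRingEnd ℂ) ((p.1:ℂ) + (p.2:ℂ) * I) * cexp (-(Real.pi:ℂ)
          * (Complex.normSq ((p.1:ℂ) + (p.2:ℂ) * I) : ℂ)
          + c * (starRingEnd ℂ) ((p.1:ℂ) + (p.2:ℂ) * I) + d * ((p.1:ℂ) + (p.2:ℂ) * I))
        = (fun x : ℝ => (x:ℂ) * bkG (c+d) x) p.1 * bkG ((d-c)*I) p.2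
          + bkG (c+d) p.1 * (fun y : ℝ => (-I) * ((y:ℂ) * bkG ((d-c)*I) y)) p.2 := by
    intro p
    simp only
    rw [bkExpand1 c d, map_add, map_mul, Complex.conj_ofReal, Complex.conj_ofReal, Complex.conj_I]
    ring
  simp_rw [hexp]
  rw [MeasureTheory.Measure.volume_eq_prod, integral_add,
    integral_prod_mul (fun x : ℝ => (x:ℂ) * bkG (c+d) x) (bkG ((d-c)*I)),
    integral_prod_mul (bkG (c+d)) (fun y : ℝ => -I * ((y:ℂ) * bkG ((d-c)*I) y))]
  · rw [integral_const_mul, bkGauss1, bkGauss2, bkGauss2, bkGauss1]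
    set E1 := cexp ((c+d)^2/(4*(Real.pi:ℂ))) with hE1
    set E2 := cexp (((d-c)*I)^2/(4*(Real.pi:ℂ))) with hE2
    have hE : E1 * E2 = cexp (c * d / Real.pi) := by
      rw [hE1, hE2, ← Complex.exp_add]
      congr 1
      field_simp
      ring_nf
      rw [Complex.I_sq]
      ring
    rw [show E1 * (-I * ((d-c)*I/(2*Real.pi) * E2))
        = (-(I*I)) * (E1 * ((d-c)/(2*Real.pi) * E2)) from by ring,
      Complex.I_mul_I, neg_neg, one_mul, ← hE]
    field_simp
    ring
  · exact ((bkInt2 (c+d)).mul_prod (bkInt1 ((d-c)*I)))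
  · exact (bkInt1 (c+d)).mul_prod ((bkInt2 ((d-c)*I)).const_mul (-I))

end BKAux

def bkGAux {n : ℕ} (i : Fin n) (z z' : Fin n → ℂ) (j : Fin n) (w : ℂ) : ℂ :=
  (if j = i then (starRingEnd ℂ) w else 1) *
    cexp (-(Real.pi:ℂ) * (Complex.normSq w : ℂ)
      + (Real.pi * z j) * (starRingEnd ℂ) w + (Real.pi * (starRingEnd ℂ) (z' j)) * w)

/-- `∫ 𝒫(z, w) w̄_i 𝒫(w, z') dW = z̄'_i 𝒫(z, z')`. -/
theorem bergK_reproduces_conj_coord {n : ℕ} (i : Fin n) (z z' : Fin n → ℂ) :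
    (∫ w : Fin n → ℂ, bergK z w * (starRingEnd ℂ) (w i) * bergK w z')
      = (starRingEnd ℂ) (z' i) * bergK z z' := by
  have hπ : (Real.pi:ℂ) ≠ 0 := by exact_mod_cast Real.pi_ne_zero
  set C := cexp (-((Real.pi:ℂ)/2) * ∑ j, ((Complex.normSq (z j) : ℂ)
    + (Complex.normSq (z' j) : ℂ))) with hC
  have hA : ∀ w : Fin n → ℂ, bergK z w * (starRingEnd ℂ) (w i) * bergK w z'
      = C * ∏ j, bkGAux i z z' j (w j) := by
    intro w
    have hprod : ∏ j, bkGAux i z z' j (w j)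
        = (starRingEnd ℂ) (w i) * cexp (∑ j, (-(Real.pi:ℂ) * (Complex.normSq (w j) : ℂ)
            + (Real.pi * z j) * (starRingEnd ℂ) (w j)
            + (Real.pi * (starRingEnd ℂ) (z' j)) * (w j))) := by
      unfold bkGAux
      rw [Finset.prod_mul_distrib, Finset.prod_ite_eq' Finset.univ i
        (fun j => (starRingEnd ℂ) (w j)), if_pos (Finset.mem_univ i), ← Complex.exp_sum]
    rw [hprod, bergK, bergK, hC]
    rw [show ∀ a b u : ℂ, cexp a * u * cexp b = (cexp a * cexp b) * u from
      fun a b u => by ring, ← Complex.exp_add]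
    rw [show ∀ e1 e2 u : ℂ, e2 * (u * e1) = (e2 * e1) * u from fun e1 e2 u => by ring,
      ← Complex.exp_add]
    congr 2
    simp only [Finset.mul_sum, ← Finset.sum_add_distrib]
    exact Finset.sum_congr rfl fun j _ => by ring
  simp_rw [hA]
  rw [integral_const_mul, integral_fintype_prod_volume_eq_prod (bkGAux i z z')]
  have hg : ∀ j, (∫ w : ℂ, bkGAux i z z' j w)
      = (if j = i then (starRingEnd ℂ) (z' j) else 1)
        * cexp ((Real.pi:ℂ) * z j * (starRingEnd ℂ) (z' j)) := by
    intro j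
    by_cases hj : j = i
    · simp only [bkGAux, if_pos hj]
      rw [bkGaussC' (Real.pi * z j) (Real.pi * (starRingEnd ℂ) (z' j))]
      congr 1
      · field_simp
      · congr 1; field_simp
    · simp only [bkGAux, if_neg hj, one_mul]
      rw [bkGaussC (Real.pi * z j) (Real.pi * (starRingEnd ℂ) (z' j))]
      congr 1
      field_simp
  simp_rw [hg]
  rw [Finset.prod_mul_distrib, Finset.prod_ite_eq' Finset.univ i
    (fun j => (starRingEnd ℂ) (z' j)), if_pos (Finset.mem_univ i), ← Complex.exp_sum]
  rw [bergK, hC]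
  rw [show ∀ a u e : ℂ, cexp a * (u * e) = u * (cexp a * e) from fun a u e => by ring,
    ← Complex.exp_add]
  congr 2
  simp only [Finset.mul_sum, ← Finset.sum_add_distrib]
  exact Finset.sum_congr rfl fun j _ => by ring
end
end

section
/- The kernel calculus is associative: let F, G, H : ℂ^n × ℂ^n → ℂ be polynomial functions in the underlying real coordinates, and suppose K₁, K₂, K₃, K₄ are polynomial functions of the same type satisfying, for all z, z' ∈ ℂ^n: ∫ F(z,w)𝒫(z,w)G(w,z')𝒫(w,z') dW = K₁(z,z')𝒫(z,z'), ∫ G(z,w)𝒫(z,w)H(w,z')𝒫(w,z') dW = K₂(z,z')𝒫(z,z'), ∫ K₁(z,w)𝒫(z,w)H(w,z')𝒫(w,z') dW = K₃(z,z')𝒫(z,z'), and ∫ F(z,w)𝒫(z,w)K₂(w,z')𝒫(w,z') dW = K₄(z,z')𝒫(z,z'). Then K₃ = K₄. -/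
open MeasureTheory Complex

noncomputable section

set_option maxHeartbeats 1000000

lemma norm_bergK {n : ℕ} (a b : Fin n → ℂ) :
    ‖bergK a b‖ = Real.exp (-(Real.pi / 2) * ∑ j, Complex.normSq (a j - b j)) := by
  rw [bergK, Complex.norm_exp]
  congr 1
  rw [show -((Real.pi : ℂ) / 2) = ((-(Real.pi / 2) : ℝ) : ℂ) by push_cast; ring,
    Complex.re_ofReal_mul, Complex.re_sum _]
  congr 1
  apply Finset.sum_congr rfl
  intro j _
  rw [Complex.normSq_sub]
  simp [Complex.sub_re, Complex.add_re, Complex.ofReal_re, Complex.mul_re]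
  ring

lemma aux_exp_bound {ε : ℝ} (hε : 0 < ε) (k : ℕ) :
    ∃ M : ℝ, 0 ≤ M ∧ ∀ t : ℝ, 0 ≤ t → (1 + t) ^ k * Real.exp (-ε * t ^ 2) ≤ M := by
  refine ⟨2 ^ k * (2 + k.factorial * ε⁻¹ ^ k), by positivity, fun t ht => ?_⟩
  have he1 : Real.exp (-ε * t ^ 2) ≤ 1 := by
    rw [Real.exp_le_one_iff]; nlinarith
  have hpow : (1 + t) ^ k ≤ 2 ^ k * (1 + t ^ k) := by
    rcases le_total t 1 with h | h
    · have : (1 + t) ^ k ≤ 2 ^ k := pow_le_pow_left₀ (by linarith) (by linarith) k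
      nlinarith [pow_nonneg ht k, (by positivity : (0:ℝ) < 2 ^ k)]
    · have : (1 + t) ^ k ≤ (2 * t) ^ k := pow_le_pow_left₀ (by linarith) (by linarith) k
      rw [mul_pow] at this
      nlinarith [(by positivity : (0:ℝ) < 2 ^ k)]
  have hkey : t ^ k * Real.exp (-ε * t ^ 2) ≤ 1 + k.factorial * ε⁻¹ ^ k := by
    rcases le_total t 1 with h | h
    · have h1 : t ^ k ≤ 1 := pow_le_one₀ ht h
      have : t ^ k * Real.exp (-ε * t ^ 2) ≤ 1 * 1 :=
        mul_le_mul h1 he1 (Real.exp_nonneg _) zero_le_one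
      have h2 : (0:ℝ) ≤ k.factorial * ε⁻¹ ^ k := by positivity
      linarith
    · have h2 : (ε * t ^ 2) ^ k / k.factorial ≤ Real.exp (ε * t ^ 2) := by
        have := Real.sum_le_exp_of_nonneg (x := ε * t ^ 2) (by positivity) (k + 1)
        refine le_trans ?_ this
        exact Finset.single_le_sum (f := fun i => (ε * t ^ 2) ^ i / i.factorial)
          (fun i _ => by positivity) (Finset.self_mem_range_succ k)
      -- t ^ k ≤ (t^2)^k since t ≥ 1
      have h3 : t ^ k ≤ (t ^ 2) ^ k := by
        apply pow_le_pow_left₀ ht; nlinarith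
      have h4 : (t ^ 2) ^ k ≤ k.factorial * ε⁻¹ ^ k * Real.exp (ε * t ^ 2) := by
        have hf : (0:ℝ) < k.factorial := by positivity
        rw [div_le_iff₀ hf] at h2
        have : (ε * t ^ 2) ^ k = ε ^ k * (t ^ 2) ^ k := by rw [mul_pow]
        rw [this] at h2
        have hεk : (0:ℝ) < ε ^ k := by positivity
        calc (t ^ 2) ^ k = ε⁻¹ ^ k * (ε ^ k * (t ^ 2) ^ k) := by
              field_simp
              rw [one_div, inv_pow, inv_mul_cancel₀ hεk.ne']
          _ ≤ ε⁻¹ ^ k * (Real.exp (ε * t ^ 2) * k.factorial) := by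
              apply mul_le_mul_of_nonneg_left h2 (by positivity)
          _ = k.factorial * ε⁻¹ ^ k * Real.exp (ε * t ^ 2) := by ring
      have h5 : t ^ k * Real.exp (-ε * t ^ 2) ≤ k.factorial * ε⁻¹ ^ k := by
        have hE : Real.exp (-ε * t ^ 2) = (Real.exp (ε * t ^ 2))⁻¹ := by
          rw [← Real.exp_neg]; ring_nf
        rw [hE]
        have hEpos : (0:ℝ) < Real.exp (ε * t ^ 2) := Real.exp_pos _
        rw [mul_inv_le_iff₀ hEpos]
        exact le_trans h3 h4
      linarith
  calc (1 + t) ^ k * Real.exp (-ε * t ^ 2) ≤ 2 ^ k * (1 + t ^ k) * Real.exp (-ε * t ^ 2) := by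
        apply mul_le_mul_of_nonneg_right hpow (Real.exp_nonneg _)
    _ = 2 ^ k * (Real.exp (-ε * t ^ 2) + t ^ k * Real.exp (-ε * t ^ 2)) := by ring
    _ ≤ 2 ^ k * (1 + (1 + k.factorial * ε⁻¹ ^ k)) := by
        have h2 : (0:ℝ) ≤ 2 ^ k := by positivity
        apply mul_le_mul_of_nonneg_left (by linarith) h2
    _ = 2 ^ k * (2 + k.factorial * ε⁻¹ ^ k) := by ring


lemma sq_pi_norm_le {n : ℕ} (x : Fin n → ℂ) :
    ‖x‖ ^ 2 ≤ ∑ j, Complex.normSq (x j) := by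
  have hQ : 0 ≤ ∑ j, Complex.normSq (x j) :=
    Finset.sum_nonneg fun j _ => Complex.normSq_nonneg _
  have h : ‖x‖ ≤ Real.sqrt (∑ j, Complex.normSq (x j)) := by
    rw [pi_norm_le_iff_of_nonneg (Real.sqrt_nonneg _)]
    intro j
    have h1 : ‖x j‖ = Real.sqrt (Complex.normSq (x j)) := by
      rw [Complex.norm_def]
    rw [h1]
    exact Real.sqrt_le_sqrt (Finset.single_le_sum
      (f := fun j => Complex.normSq (x j)) (fun j _ => Complex.normSq_nonneg _)
      (Finset.mem_univ j))
  calc ‖x‖ ^ 2 ≤ Real.sqrt (∑ j, Complex.normSq (x j)) ^ 2 :=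
        pow_le_pow_left₀ (norm_nonneg _) h 2
    _ = _ := Real.sq_sqrt hQ


lemma gauss_dom {n : ℕ} (k : ℕ) (a : Fin n → ℂ) :
    ∃ M : ℝ, 0 ≤ M ∧ ∀ u : Fin n → ℂ,
      (1 + ‖u‖) ^ k * Real.exp (-(Real.pi / 2) * ∑ j, Complex.normSq (u j - a j))
        ≤ M * Real.exp (-(Real.pi / 4) * ∑ j, Complex.normSq (u j - a j)) := by
  obtain ⟨M₀, hM₀, hbd⟩ := aux_exp_bound (show (0:ℝ) < Real.pi / 4 by positivity) k
  refine ⟨(1 + ‖a‖) ^ k * M₀, by positivity, fun u => ?_⟩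
  set Q := ∑ j, Complex.normSq (u j - a j) with hQdef
  have hQ0 : 0 ≤ Q := Finset.sum_nonneg fun j _ => Complex.normSq_nonneg _
  set t := ‖u - a‖ with ht
  have ht0 : 0 ≤ t := norm_nonneg _
  have h2 : t ^ 2 ≤ Q := by
    have := sq_pi_norm_le (u - a)
    simpa [hQdef] using this
  have h1 : 1 + ‖u‖ ≤ (1 + ‖a‖) * (1 + t) := by
    have hu : ‖u‖ ≤ ‖a‖ + t := by
      calc ‖u‖ = ‖a + (u - a)‖ := by ring_nf
        _ ≤ ‖a‖ + ‖u - a‖ := norm_add_le _ _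
    nlinarith [norm_nonneg a]
  have hsplit : Real.exp (-(Real.pi / 2) * Q)
      = Real.exp (-(Real.pi / 4) * Q) * Real.exp (-(Real.pi / 4) * Q) := by
    rw [← Real.exp_add]; ring_nf
  have hmono : Real.exp (-(Real.pi / 4) * Q) ≤ Real.exp (-(Real.pi / 4) * t ^ 2) := by
    apply Real.exp_le_exp_of_le
    nlinarith [Real.pi_pos]
  calc (1 + ‖u‖) ^ k * Real.exp (-(Real.pi / 2) * Q)
      ≤ ((1 + ‖a‖) * (1 + t)) ^ k * (Real.exp (-(Real.pi / 4) * t ^ 2)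
          * Real.exp (-(Real.pi / 4) * Q)) := by
        rw [hsplit]
        have hb : (1 + ‖u‖) ^ k ≤ ((1 + ‖a‖) * (1 + t)) ^ k :=
          pow_le_pow_left₀ (by positivity) h1 k
        have := mul_le_mul hmono (le_refl (Real.exp (-(Real.pi / 4) * Q)))
          (Real.exp_nonneg _) (Real.exp_nonneg _)
        calc (1 + ‖u‖) ^ k * (Real.exp (-(Real.pi / 4) * Q) * Real.exp (-(Real.pi / 4) * Q))
            ≤ ((1 + ‖a‖) * (1 + t)) ^ k * (Real.exp (-(Real.pi / 4) * Q)
                * Real.exp (-(Real.pi / 4) * Q)) := by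
              apply mul_le_mul_of_nonneg_right hb (by positivity)
          _ ≤ _ := by
              apply mul_le_mul_of_nonneg_left _ (by positivity)
              apply mul_le_mul_of_nonneg_right hmono (Real.exp_nonneg _)
    _ = (1 + ‖a‖) ^ k * ((1 + t) ^ k * Real.exp (-(Real.pi / 4) * t ^ 2))
        * Real.exp (-(Real.pi / 4) * Q) := by rw [mul_pow]; ring
    _ ≤ (1 + ‖a‖) ^ k * M₀ * Real.exp (-(Real.pi / 4) * Q) := by
        apply mul_le_mul_of_nonneg_right _ (Real.exp_nonneg _)
        apply mul_le_mul_of_nonneg_left (hbd t ht0) (by positivity)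

lemma integrable_gauss {n : ℕ} {c : ℝ} (hc : 0 < c) (a : Fin n → ℂ) :
    Integrable (fun u : Fin n → ℂ => Real.exp (-c * ∑ j, Complex.normSq (u j - a j))) := by
  have h1d : ∀ z : ℂ, Integrable (fun w : ℂ => Real.exp (-c * Complex.normSq (w - z))) := by
    intro z
    have h0 : Integrable (fun w : ℂ => Real.exp (-c * Complex.normSq w)) := by
      have h := (GaussianFourier.integrable_cexp_neg_mul_sq_norm_add
        (b := (c : ℂ)) (by simpa using hc) 0 (0 : ℂ)).norm
      refine h.congr (Filter.Eventually.of_forall fun w => ?_)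
      show ‖cexp (-(c:ℂ) * ‖w‖ ^ 2 + 0 * (inner ℝ (0:ℂ) w : ℝ))‖ = Real.exp (-c * normSq w)
      rw [Complex.norm_exp]
      simp [Complex.normSq_eq_norm_sq, Complex.add_re, Complex.mul_re,
        Complex.ofReal_re, Complex.ofReal_im, Complex.neg_re, Complex.neg_im, ← Complex.ofReal_pow]
    simpa using h0.comp_sub_right z
  have heq : (fun u : Fin n → ℂ => Real.exp (-c * ∑ j, Complex.normSq (u j - a j)))
      = fun u => ∏ j, Real.exp (-c * Complex.normSq (u j - a j)) := by
    funext u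
    rw [show -c * ∑ j, Complex.normSq (u j - a j) = ∑ j, -c * Complex.normSq (u j - a j) from
      Finset.mul_sum _ _ _, Real.exp_sum]
  rw [heq]
  exact Integrable.fintype_prod fun j => h1d (a j)


lemma norm_eval_le {σ : Type*} (p : MvPolynomial σ ℂ) (v : σ → ℂ) {B : ℝ} (hB : 1 ≤ B)
    (hv : ∀ i, ‖v i‖ ≤ B) :
    ‖MvPolynomial.eval v p‖ ≤ (∑ m ∈ p.support, ‖MvPolynomial.coeff m p‖) * B ^ p.totalDegree := by
  rw [MvPolynomial.eval_eq]
  refine (norm_sum_le _ _).trans ?_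
  rw [Finset.sum_mul]
  refine Finset.sum_le_sum fun m hm => ?_
  rw [norm_mul]
  refine mul_le_mul_of_nonneg_left ?_ (norm_nonneg _)
  rw [norm_prod]
  calc ∏ i ∈ m.support, ‖v i ^ m i‖ ≤ ∏ i ∈ m.support, B ^ m i :=
        Finset.prod_le_prod (fun _ _ => norm_nonneg _)
          (fun i _ => by rw [norm_pow]; exact pow_le_pow_left₀ (norm_nonneg _) (hv i) _)
    _ = B ^ (∑ i ∈ m.support, m i) := Finset.prod_pow_eq_pow_sum _ _ _
    _ ≤ B ^ p.totalDegree := by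
        apply pow_le_pow_right₀ hB
        exact MvPolynomial.le_totalDegree hm

lemma polyKernel_bound {n : ℕ} {F : (Fin n → ℂ) → (Fin n → ℂ) → ℂ} (hF : IsPolyKernel F) :
    ∃ C : ℝ, 0 ≤ C ∧ ∃ d : ℕ, ∀ z w : Fin n → ℂ,
      ‖F z w‖ ≤ C * ((1 + ‖z‖) ^ d * (1 + ‖w‖) ^ d) := by
  obtain ⟨p, hp⟩ := hF
  refine ⟨∑ m ∈ p.support, ‖MvPolynomial.coeff m p‖, by positivity, p.totalDegree,
    fun z w => ?_⟩
  rw [hp]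
  have hB : (1:ℝ) ≤ (1 + ‖z‖) * (1 + ‖w‖) := by nlinarith [norm_nonneg z, norm_nonneg w]
  have hz : ∀ i, ‖z i‖ ≤ (1 + ‖z‖) * (1 + ‖w‖) := fun i => by
    have := norm_le_pi_norm z i
    nlinarith [norm_nonneg z, norm_nonneg w]
  have hw : ∀ i, ‖w i‖ ≤ (1 + ‖z‖) * (1 + ‖w‖) := fun i => by
    have := norm_le_pi_norm w i
    nlinarith [norm_nonneg z, norm_nonneg w]
  have h := norm_eval_le p
    (Sum.elim (fun i => z i) (Sum.elim (fun i => (starRingEnd ℂ) (z i))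
          (Sum.elim (fun i => w i) (fun i => (starRingEnd ℂ) (w i))))) hB ?_
  · calc _ ≤ (∑ m ∈ p.support, ‖MvPolynomial.coeff m p‖)
          * ((1 + ‖z‖) * (1 + ‖w‖)) ^ p.totalDegree := h
      _ = _ := by rw [mul_pow]
  · rintro (i | i | i | i)
    · simpa using hz i
    · simpa using hz i
    · simpa using hw i
    · simpa using hw i

lemma continuous_eval_comp {σ : Type*} {α : Type*} [TopologicalSpace α] (p : MvPolynomial σ ℂ)
    (v : σ → α → ℂ) (hv : ∀ i, Continuous (v i)) :
    Continuous fun x => MvPolynomial.eval (fun i => v i x) p := by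
  induction p using MvPolynomial.induction_on with
  | C a => simpa using continuous_const
  | add p q hp hq => simp only [map_add]; exact hp.add hq
  | mul_X p i hp => simp only [map_mul, MvPolynomial.eval_X]; exact hp.mul (hv i)

lemma polyKernel_continuous {n : ℕ} {F : (Fin n → ℂ) → (Fin n → ℂ) → ℂ} (hF : IsPolyKernel F) :
    Continuous fun q : (Fin n → ℂ) × (Fin n → ℂ) => F q.1 q.2 := by
  obtain ⟨p, hp⟩ := hF
  have : (fun q : (Fin n → ℂ) × (Fin n → ℂ) => F q.1 q.2)
      = fun q => MvPolynomial.eval (fun s =>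
          (fun (s : Fin n ⊕ Fin n ⊕ Fin n ⊕ Fin n) (q : (Fin n → ℂ) × (Fin n → ℂ)) =>
            Sum.elim (fun i => q.1 i)
            (Sum.elim (fun i => (starRingEnd ℂ) (q.1 i))
              (Sum.elim (fun i => q.2 i) (fun i => (starRingEnd ℂ) (q.2 i)))) s) s q) p := by
    funext q; exact hp q.1 q.2
  rw [this]
  apply continuous_eval_comp
  rintro (i | i | i | i) <;> simp only [Sum.elim_inl, Sum.elim_inr] <;>
    · first
      | fun_prop
      | exact Complex.continuous_conj.comp (by fun_prop)


lemma norm_bergK' {n : ℕ} (a b : Fin n → ℂ) :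
    ‖bergK a b‖ = Real.exp (-(Real.pi / 2) * ∑ j, Complex.normSq (b j - a j)) := by
  rw [norm_bergK]
  congr 2
  apply Finset.sum_congr rfl
  intro j _
  rw [show a j - b j = -(b j - a j) by ring, Complex.normSq_neg]

lemma norm_bergK_le_one {n : ℕ} (a b : Fin n → ℂ) : ‖bergK a b‖ ≤ 1 := by
  rw [norm_bergK, Real.exp_le_one_iff]
  have h : 0 ≤ ∑ j, Complex.normSq (a j - b j) :=
    Finset.sum_nonneg fun j _ => Complex.normSq_nonneg _
  nlinarith [Real.pi_pos]

lemma continuous_bergK {n : ℕ} :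
    Continuous fun q : (Fin n → ℂ) × (Fin n → ℂ) => bergK q.1 q.2 := by
  unfold bergK
  apply Complex.continuous_exp.comp
  apply Continuous.mul continuous_const
  apply continuous_finset_sum
  intro j _
  apply Continuous.sub
  · apply Continuous.add
    · exact Complex.continuous_ofReal.comp (Complex.continuous_normSq.comp
        ((continuous_apply j).comp continuous_fst))
    · exact Complex.continuous_ofReal.comp (Complex.continuous_normSq.comp
        ((continuous_apply j).comp continuous_snd))
  · exact (continuous_const.mul ((continuous_apply j).comp continuous_fst)).mul
      (Complex.continuous_conj.comp ((continuous_apply j).comp continuous_snd))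


lemma integrable_main {n : ℕ} {F G H : (Fin n → ℂ) → (Fin n → ℂ) → ℂ}
    (hF : IsPolyKernel F) (hG : IsPolyKernel G) (hH : IsPolyKernel H) (z z' : Fin n → ℂ) :
    Integrable (Function.uncurry fun w u : Fin n → ℂ =>
      F z u * bergK z u * G u w * bergK u w * (H w z' * bergK w z'))
      ((volume : Measure (Fin n → ℂ)).prod volume) := by
  obtain ⟨CF, hCF, dF, hFb⟩ := polyKernel_bound hF
  obtain ⟨CG, hCG, dG, hGb⟩ := polyKernel_bound hG
  obtain ⟨CH, hCH, dH, hHb⟩ := polyKernel_bound hH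
  obtain ⟨M₁, hM₁, hg1⟩ := gauss_dom (dF + dG) z
  obtain ⟨M₂, hM₂, hg2⟩ := gauss_dom (dG + dH) z'
  obtain ⟨c₀, hc₀⟩ : ∃ c₀ : ℝ, c₀ = CF * (1 + ‖z‖) ^ dF * CG * (CH * (1 + ‖z'‖) ^ dH) :=
    ⟨_, rfl⟩
  have hc₀0 : 0 ≤ c₀ := by rw [hc₀]; positivity
  have hgint : Integrable (fun q : (Fin n → ℂ) × (Fin n → ℂ) =>
      ((c₀ * M₁ * M₂) * Real.exp (-(Real.pi / 4) * ∑ j, Complex.normSq (q.1 j - z' j)))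
      * Real.exp (-(Real.pi / 4) * ∑ j, Complex.normSq (q.2 j - z j)))
      ((volume : Measure (Fin n → ℂ)).prod volume) :=
    ((integrable_gauss (by positivity) z').const_mul _).mul_prod
      (integrable_gauss (by positivity) z)
  have hmeas : AEStronglyMeasurable (Function.uncurry fun w u : Fin n → ℂ =>
      F z u * bergK z u * G u w * bergK u w * (H w z' * bergK w z'))
      ((volume : Measure (Fin n → ℂ)).prod volume) := by
    have c1 : Continuous fun q : (Fin n → ℂ) × (Fin n → ℂ) => F z q.2 :=
      Continuous.comp (g := fun q : (Fin n → ℂ) × (Fin n → ℂ) => F q.1 q.2)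
        (f := fun q : (Fin n → ℂ) × (Fin n → ℂ) => ((z, q.2) : (Fin n → ℂ) × (Fin n → ℂ)))
        (polyKernel_continuous hF) (continuous_const.prodMk continuous_snd)
    have c2 : Continuous fun q : (Fin n → ℂ) × (Fin n → ℂ) => bergK z q.2 :=
      Continuous.comp (g := fun q : (Fin n → ℂ) × (Fin n → ℂ) => bergK q.1 q.2)
        (f := fun q : (Fin n → ℂ) × (Fin n → ℂ) => ((z, q.2) : (Fin n → ℂ) × (Fin n → ℂ)))
        continuous_bergK (continuous_const.prodMk continuous_snd)
    have c3 : Continuous fun q : (Fin n → ℂ) × (Fin n → ℂ) => G q.2 q.1 :=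
      Continuous.comp (g := fun q : (Fin n → ℂ) × (Fin n → ℂ) => G q.1 q.2)
        (f := fun q : (Fin n → ℂ) × (Fin n → ℂ) => ((q.2, q.1) : (Fin n → ℂ) × (Fin n → ℂ)))
        (polyKernel_continuous hG) (continuous_snd.prodMk continuous_fst)
    have c4 : Continuous fun q : (Fin n → ℂ) × (Fin n → ℂ) => bergK q.2 q.1 :=
      Continuous.comp (g := fun q : (Fin n → ℂ) × (Fin n → ℂ) => bergK q.1 q.2)
        (f := fun q : (Fin n → ℂ) × (Fin n → ℂ) => ((q.2, q.1) : (Fin n → ℂ) × (Fin n → ℂ)))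
        continuous_bergK (continuous_snd.prodMk continuous_fst)
    have c5 : Continuous fun q : (Fin n → ℂ) × (Fin n → ℂ) => H q.1 z' :=
      Continuous.comp (g := fun q : (Fin n → ℂ) × (Fin n → ℂ) => H q.1 q.2)
        (f := fun q : (Fin n → ℂ) × (Fin n → ℂ) => ((q.1, z') : (Fin n → ℂ) × (Fin n → ℂ)))
        (polyKernel_continuous hH) (continuous_fst.prodMk continuous_const)
    have c6 : Continuous fun q : (Fin n → ℂ) × (Fin n → ℂ) => bergK q.1 z' :=
      Continuous.comp (g := fun q : (Fin n → ℂ) × (Fin n → ℂ) => bergK q.1 q.2)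
        (f := fun q : (Fin n → ℂ) × (Fin n → ℂ) => ((q.1, z') : (Fin n → ℂ) × (Fin n → ℂ)))
        continuous_bergK (continuous_fst.prodMk continuous_const)
    exact ((((c1.mul c2).mul c3).mul c4).mul (c5.mul c6)).aestronglyMeasurable
  have hbound : ∀ q : (Fin n → ℂ) × (Fin n → ℂ),
      ‖(Function.uncurry fun w u : Fin n → ℂ =>
        F z u * bergK z u * G u w * bergK u w * (H w z' * bergK w z')) q‖
      ≤ ((c₀ * M₁ * M₂) * Real.exp (-(Real.pi / 4) * ∑ j, Complex.normSq (q.1 j - z' j)))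
        * Real.exp (-(Real.pi / 4) * ∑ j, Complex.normSq (q.2 j - z j)) := by
    rintro ⟨w, u⟩
    simp only [Function.uncurry]
    have bu : ‖bergK z u‖ = Real.exp (-(Real.pi / 2) * ∑ j, Complex.normSq (u j - z j)) :=
      norm_bergK' z u
    have bw : ‖bergK w z'‖ = Real.exp (-(Real.pi / 2) * ∑ j, Complex.normSq (w j - z' j)) :=
      norm_bergK w z'
    have buw : ‖bergK u w‖ ≤ 1 := norm_bergK_le_one u w
    have hFu := hFb z u
    have hGu := hGb u w
    have hHw := hHb w z'
    have e1 := hg1 u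
    have e2 := hg2 w
    calc ‖F z u * bergK z u * G u w * bergK u w * (H w z' * bergK w z')‖
        = ‖F z u‖ * ‖bergK z u‖ * ‖G u w‖ * ‖bergK u w‖ * (‖H w z'‖ * ‖bergK w z'‖) := by
          simp [norm_mul]
      _ ≤ (CF * ((1 + ‖z‖) ^ dF * (1 + ‖u‖) ^ dF)) * ‖bergK z u‖
            * (CG * ((1 + ‖u‖) ^ dG * (1 + ‖w‖) ^ dG)) * 1
            * ((CH * ((1 + ‖w‖) ^ dH * (1 + ‖z'‖) ^ dH)) * ‖bergK w z'‖) := by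
          gcongr <;> positivity
      _ = c₀ * (((1 + ‖u‖) ^ (dF + dG)
              * Real.exp (-(Real.pi / 2) * ∑ j, Complex.normSq (u j - z j)))
            * ((1 + ‖w‖) ^ (dG + dH)
              * Real.exp (-(Real.pi / 2) * ∑ j, Complex.normSq (w j - z' j)))) := by
          rw [bu, bw, hc₀]; ring
      _ ≤ c₀ * ((M₁ * Real.exp (-(Real.pi / 4) * ∑ j, Complex.normSq (u j - z j)))
            * (M₂ * Real.exp (-(Real.pi / 4) * ∑ j, Complex.normSq (w j - z' j)))) := by
          gcongr
      _ = _ := by ring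
  exact hgint.mono' hmeas (Filter.Eventually.of_forall hbound)


/-- The kernel calculus is associative: `𝒦[𝒦[F,G],H] = 𝒦[F,𝒦[G,H]]`. -/
theorem kernel_calculus_assoc {n : ℕ} (F G H K₁ K₂ K₃ K₄ : (Fin n → ℂ) → (Fin n → ℂ) → ℂ)
    (hF : IsPolyKernel F) (hG : IsPolyKernel G) (hH : IsPolyKernel H)
    (hK₁ : IsPolyKernel K₁) (hK₂ : IsPolyKernel K₂)
    (hK₃ : IsPolyKernel K₃) (hK₄ : IsPolyKernel K₄)
    (h₁ : ∀ z z' : Fin n → ℂ,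
      (∫ w : Fin n → ℂ, F z w * bergK z w * G w z' * bergK w z') = K₁ z z' * bergK z z')
    (h₂ : ∀ z z' : Fin n → ℂ,
      (∫ w : Fin n → ℂ, G z w * bergK z w * H w z' * bergK w z') = K₂ z z' * bergK z z')
    (h₃ : ∀ z z' : Fin n → ℂ,
      (∫ w : Fin n → ℂ, K₁ z w * bergK z w * H w z' * bergK w z') = K₃ z z' * bergK z z')
    (h₄ : ∀ z z' : Fin n → ℂ,
      (∫ w : Fin n → ℂ, F z w * bergK z w * K₂ w z' * bergK w z') = K₄ z z' * bergK z z') :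
    K₃ = K₄ := by
  funext z z'
  have hberg : bergK z z' ≠ 0 := Complex.exp_ne_zero _
  have key : K₃ z z' * bergK z z' = K₄ z z' * bergK z z' := by
    rw [← h₃ z z', ← h₄ z z']
    calc (∫ w : Fin n → ℂ, K₁ z w * bergK z w * H w z' * bergK w z')
        = ∫ w : Fin n → ℂ, ∫ u : Fin n → ℂ,
            F z u * bergK z u * G u w * bergK u w * (H w z' * bergK w z') := by
          congr 1
          funext w
          rw [show K₁ z w * bergK z w * H w z' * bergK w z'
              = (K₁ z w * bergK z w) * (H w z' * bergK w z') by ring, ← h₁ z w,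
            ← integral_mul_const]
      _ = ∫ u : Fin n → ℂ, ∫ w : Fin n → ℂ,
            F z u * bergK z u * G u w * bergK u w * (H w z' * bergK w z') :=
          integral_integral_swap (integrable_main hF hG hH z z')
      _ = ∫ u : Fin n → ℂ, F z u * bergK z u * K₂ u z' * bergK u z' := by
          congr 1
          funext u
          rw [show (fun w => F z u * bergK z u * G u w * bergK u w * (H w z' * bergK w z'))
              = fun w => (F z u * bergK z u) * (G u w * bergK u w * H w z' * bergK w z') from
            funext fun w => by ring]
          rw [integral_const_mul, h₂ u z']
          ring
  exact mul_right_cancel₀ hberg key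
end
end

section
/- For all 1 ≤ i, j ≤ n and all z, z' ∈ ℂ^n, ∫_{ℂ^n} w_i · 𝒫(z, w) · w̄_j · 𝒫(w, z') dW = ((1/π) δ_{ij} + z_i z̄'_j) · 𝒫(z, z'). -/
open MeasureTheory Complex

noncomputable section

set_option maxHeartbeats 1000000

/-- 1D complex Gaussian factor. -/
def Ec (c : ℂ) (x : ℝ) : ℂ := Complex.exp (-(Real.pi : ℂ) * x ^ 2 + c * x)

lemma hasDerivAt_Ec (c : ℂ) (x : ℝ) :
    HasDerivAt (Ec c) (Ec c x * (-(2 * (Real.pi:ℂ)) * x + c)) x := by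
  have h0 : HasDerivAt (fun t : ℝ => (t : ℂ)) 1 x := by
    simpa using (hasDerivAt_id x).ofReal_comp
  have h1 : HasDerivAt (fun t : ℝ => -(Real.pi:ℂ) * (t:ℂ) ^ 2 + c * t)
      (-(Real.pi:ℂ) * (2 * x) + c) x := by
    have ha : HasDerivAt (fun t : ℝ => -(Real.pi:ℂ) * (t:ℂ) ^ 2)
        (-(Real.pi:ℂ) * (2 * x)) x := by
      have := (h0.mul h0).const_mul (-(Real.pi:ℂ))
      have h2 : HasDerivAt (fun t : ℝ => -(Real.pi:ℂ) * ((t:ℂ) * t))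
          (-(Real.pi:ℂ) * (1 * x + x * 1)) x := this
      convert h2 using 2 with t
      · ring
      · push_cast; ring
    have hb : HasDerivAt (fun t : ℝ => c * (t:ℂ)) c x := by
      simpa using h0.const_mul c
    exact ha.add hb
  have h2 := h1.cexp
  convert h2 using 1
  all_goals (unfold Ec; ring)

lemma norm_pow_Ec_le (m : ℕ) (c : ℂ) (x : ℝ) :
    ‖(x:ℂ) ^ m * Ec c x‖ ≤
      Real.exp ((m + |c.re|) ^ 2 / (2 * Real.pi)) * Real.exp (-(Real.pi / 2) * x ^ 2) := by
  have hπ := Real.pi_pos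
  have hnorm : ‖(x:ℂ) ^ m * Ec c x‖ = |x| ^ m * Real.exp (-Real.pi * x ^ 2 + c.re * x) := by
    rw [norm_mul, norm_pow, Complex.norm_real, Real.norm_eq_abs, Ec, Complex.norm_exp]
    congr 1
    simp [← Complex.ofReal_pow]
  rw [hnorm, ← Real.exp_add]
  have h1 : |x| ^ m ≤ Real.exp (m * |x|) := by
    calc |x| ^ m ≤ Real.exp |x| ^ m := by
          apply pow_le_pow_left₀ (abs_nonneg x)
          linarith [Real.add_one_le_exp |x|]
      _ = Real.exp (m * |x|) := by rw [← Real.exp_nat_mul]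
  calc |x| ^ m * Real.exp (-Real.pi * x ^ 2 + c.re * x)
      ≤ Real.exp (m * |x|) * Real.exp (-Real.pi * x ^ 2 + c.re * x) := by
        apply mul_le_mul_of_nonneg_right h1 (Real.exp_pos _).le
    _ = Real.exp (m * |x| + c.re * x - Real.pi * x ^ 2) := by rw [← Real.exp_add]; ring_nf
    _ ≤ Real.exp ((m + |c.re|) ^ 2 / (2 * Real.pi) + -(Real.pi / 2) * x ^ 2) := by
        apply Real.exp_le_exp.2
        have h2 : c.re * x ≤ |c.re| * |x| := by
          calc c.re * x ≤ |c.re * x| := le_abs_self _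
            _ = |c.re| * |x| := abs_mul _ _
        have h2π : (0:ℝ) < 2 * Real.pi := by linarith
        have h3 : (m + |c.re|) * |x| ≤ (Real.pi / 2) * x ^ 2 + (m + |c.re|) ^ 2 / (2 * Real.pi) := by
          rw [← mul_le_mul_iff_right₀ h2π]
          have he : 2 * Real.pi * ((Real.pi / 2) * x ^ 2 + (m + |c.re|) ^ 2 / (2 * Real.pi))
              = Real.pi ^ 2 * x ^ 2 + (m + |c.re|) ^ 2 := by
            field_simp
          rw [he]
          nlinarith [sq_nonneg (Real.pi * |x| - ((m:ℝ) + |c.re|)), _root_.sq_abs x]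
        nlinarith [h2, h3, abs_nonneg x]

lemma integrable_pow_Ec (m : ℕ) (c : ℂ) :
    Integrable (fun x : ℝ => (x:ℂ) ^ m * Ec c x) := by
  have hπ := Real.pi_pos
  apply Integrable.mono'
    ((integrable_exp_neg_mul_sq (by positivity : (0:ℝ) < Real.pi / 2)).const_mul
      (Real.exp ((m + |c.re|) ^ 2 / (2 * Real.pi))))
  · apply Continuous.aestronglyMeasurable
    unfold Ec
    fun_prop
  · exact Filter.Eventually.of_forall fun x => norm_pow_Ec_le m c x

lemma tendsto_pow_Ec (m : ℕ) (c : ℂ) (l : Filter ℝ)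
    (hl : Filter.Tendsto (fun x : ℝ => x ^ 2) l Filter.atTop) :
    Filter.Tendsto (fun x : ℝ => (x:ℂ) ^ m * Ec c x) l (nhds 0) := by
  apply squeeze_zero_norm (norm_pow_Ec_le m c)
  rw [show (0:ℝ) = Real.exp ((m + |c.re|) ^ 2 / (2 * Real.pi)) * 0 by ring]
  apply Filter.Tendsto.const_mul
  apply Real.tendsto_exp_atBot.comp
  exact Filter.Tendsto.const_mul_atTop_of_neg (by have := Real.pi_pos; linarith) hl

lemma integral_hasDerivAt_eq_zero (g g' : ℝ → ℂ)
    (hd : ∀ x, HasDerivAt g (g' x) x) (hi : Integrable g')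
    (ht : Filter.Tendsto g Filter.atTop (nhds 0))
    (hb : Filter.Tendsto g Filter.atBot (nhds 0)) :
    ∫ x : ℝ, g' x = 0 := by
  rw [← intervalIntegral.integral_Iic_add_Ioi (b := (0:ℝ)) hi.integrableOn hi.integrableOn,
    integral_Iic_of_hasDerivAt_of_tendsto (hd 0).continuousAt.continuousWithinAt
      (fun x _ => hd x) hi.integrableOn hb,
    integral_Ioi_of_hasDerivAt_of_tendsto (hd 0).continuousAt.continuousWithinAt
      (fun x _ => hd x) hi.integrableOn ht]
  ring

lemma R0 (c : ℂ) : ∫ x : ℝ, Ec c x = Complex.exp (c ^ 2 / (4 * Real.pi)) := by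
  have hπ := Real.pi_pos
  have h := integral_cexp_quadratic (b := -(Real.pi:ℂ))
    (by simpa using hπ) c 0
  rw [show (fun x : ℝ => Ec c x) = fun x : ℝ =>
    Complex.exp (-(Real.pi:ℂ) * x ^ 2 + c * x + 0) from by funext x; rw [Ec, add_zero], h,
    neg_neg]
  rw [show ((Real.pi:ℂ) / (Real.pi:ℂ)) = 1 from
    div_self (by exact_mod_cast Real.pi_ne_zero), one_cpow, one_mul]
  congr 1
  have hne : ((Real.pi:ℂ)) ≠ 0 := by exact_mod_cast Real.pi_ne_zero
  field_simp
  ring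

open Filter in
lemma tendsto_sq_atTop : Filter.Tendsto (fun x : ℝ => x ^ 2) Filter.atTop Filter.atTop :=
  tendsto_pow_atTop (n := 2) (by norm_num)

open Filter in
lemma tendsto_sq_atBot : Filter.Tendsto (fun x : ℝ => x ^ 2) Filter.atBot Filter.atTop := by
  have h := (tendsto_pow_atTop (n := 2) (by norm_num)).comp
    (tendsto_abs_atBot_atTop : Filter.Tendsto (fun x : ℝ => |x|) Filter.atBot Filter.atTop)
  simpa [Function.comp_def, _root_.sq_abs] using h

lemma hI (m : ℕ) (c : ℂ) : Integrable (fun x : ℝ => (x:ℂ) ^ m * Ec c x) :=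
  integrable_pow_Ec m c

lemma R1 (c : ℂ) : ∫ x : ℝ, (x:ℂ) * Ec c x
    = c / (2 * Real.pi) * Complex.exp (c ^ 2 / (4 * Real.pi)) := by
  have hπ := Real.pi_pos
  have hI1 : Integrable (fun x : ℝ => (x:ℂ) * Ec c x) := by
    simpa using integrable_pow_Ec 1 c
  have hI0 : Integrable (Ec c) := by
    apply (integrable_pow_Ec 0 c).congr
    exact Filter.Eventually.of_forall fun x => by simp
  have hz : ∫ x : ℝ, Ec c x * (-(2 * (Real.pi:ℂ)) * x + c) = 0 := by
    apply integral_hasDerivAt_eq_zero (Ec c) _ (hasDerivAt_Ec c)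
    · apply ((hI1.const_mul (-(2 * (Real.pi:ℂ)))).add (hI0.const_mul c)).congr
      exact Filter.Eventually.of_forall fun x => by simp only [Pi.add_apply]; ring
    · simpa using tendsto_pow_Ec 0 c _ tendsto_sq_atTop
    · simpa using tendsto_pow_Ec 0 c _ tendsto_sq_atBot
  have hsplit : ∫ x : ℝ, Ec c x * (-(2 * (Real.pi:ℂ)) * x + c)
      = (-(2 * (Real.pi:ℂ))) * (∫ x : ℝ, (x:ℂ) * Ec c x) + c * ∫ x : ℝ, Ec c x := by
    rw [← integral_const_mul, ← integral_const_mul,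
      ← integral_add (hI1.const_mul _) (hI0.const_mul _)]
    congr 1; funext x; ring
  rw [hsplit, R0] at hz
  have hne : ((Real.pi:ℂ)) ≠ 0 := by exact_mod_cast Real.pi_ne_zero
  field_simp at hz ⊢
  linear_combination -hz

lemma R2 (c : ℂ) : ∫ x : ℝ, (x:ℂ) ^ 2 * Ec c x
    = (1 / (2 * Real.pi) + c ^ 2 / (4 * (Real.pi:ℂ) ^ 2))
        * Complex.exp (c ^ 2 / (4 * Real.pi)) := by
  have hπ := Real.pi_pos
  have hI2 : Integrable (fun x : ℝ => (x:ℂ) ^ 2 * Ec c x) := integrable_pow_Ec 2 c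
  have hI1 : Integrable (fun x : ℝ => (x:ℂ) * Ec c x) := by
    simpa using integrable_pow_Ec 1 c
  have hI0 : Integrable (Ec c) := by
    apply (integrable_pow_Ec 0 c).congr
    exact Filter.Eventually.of_forall fun x => by simp
  have hd : ∀ x : ℝ, HasDerivAt (fun x : ℝ => (x:ℂ) * Ec c x)
      (1 * Ec c x + x * (Ec c x * (-(2 * (Real.pi:ℂ)) * x + c))) x := by
    intro x
    have h0 : HasDerivAt (fun t : ℝ => (t : ℂ)) 1 x := by
      simpa using (hasDerivAt_id x).ofReal_comp
    exact h0.mul (hasDerivAt_Ec c x)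
  have hz : ∫ x : ℝ, (1 * Ec c x + x * (Ec c x * (-(2 * (Real.pi:ℂ)) * x + c))) = 0 := by
    apply integral_hasDerivAt_eq_zero _ _ hd
    · apply ((hI0.const_mul 1).add
        ((hI2.const_mul (-(2 * (Real.pi:ℂ)))).add (hI1.const_mul c))).congr
      exact Filter.Eventually.of_forall fun x => by simp only [Pi.add_apply]; ring
    · simpa using tendsto_pow_Ec 1 c _ tendsto_sq_atTop
    · simpa using tendsto_pow_Ec 1 c _ tendsto_sq_atBot
  have hsplit : ∫ x : ℝ, (1 * Ec c x + x * (Ec c x * (-(2 * (Real.pi:ℂ)) * x + c)))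
      = (∫ x : ℝ, Ec c x) + ((-(2 * (Real.pi:ℂ))) * (∫ x : ℝ, (x:ℂ) ^ 2 * Ec c x)
          + c * ∫ x : ℝ, (x:ℂ) * Ec c x) := by
    have hinner : Integrable (fun x : ℝ =>
        -(2 * (Real.pi:ℂ)) * ((x:ℂ) ^ 2 * Ec c x) + c * ((x:ℂ) * Ec c x)) :=
      (hI2.const_mul _).add (hI1.const_mul _)
    have hadd : ∫ x : ℝ, (-(2 * (Real.pi:ℂ)) * ((x:ℂ) ^ 2 * Ec c x) + c * ((x:ℂ) * Ec c x))
        = (-(2 * (Real.pi:ℂ))) * (∫ x : ℝ, (x:ℂ) ^ 2 * Ec c x)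
            + c * ∫ x : ℝ, (x:ℂ) * Ec c x := by
      rw [← integral_const_mul, ← integral_const_mul,
        ← integral_add (hI2.const_mul _) (hI1.const_mul _)]
    rw [show (fun x : ℝ => 1 * Ec c x + ↑x * (Ec c x * (-(2 * (Real.pi:ℂ)) * ↑x + c)))
        = fun x : ℝ => Ec c x
            + (-(2 * (Real.pi:ℂ)) * ((x:ℂ) ^ 2 * Ec c x) + c * ((x:ℂ) * Ec c x)) from
      funext fun x => by push_cast; ring]
    rw [integral_add hI0 hinner, hadd]
  rw [hsplit, R0, R1] at hz
  have hne : ((Real.pi:ℂ)) ≠ 0 := by exact_mod_cast Real.pi_ne_zero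
  field_simp at hz ⊢
  linear_combination (-2) * hz

/-- 2D complex Gaussian factor. -/
def Gc (a b : ℂ) (u : ℂ) : ℂ :=
  Complex.exp (-(Real.pi : ℂ) * (Complex.normSq u : ℂ)
    + (Real.pi : ℂ) * a * (starRingEnd ℂ) u + (Real.pi : ℂ) * b * u)

lemma integral_complex_eq (F : ℂ → ℂ) :
    ∫ u : ℂ, F u = ∫ p : ℝ × ℝ, F (p.1 + p.2 * Complex.I) := by
  have h := (Complex.volume_preserving_equiv_real_prod).symm Complex.measurableEquivRealProd
  rw [← h.integral_comp (MeasurableEquiv.measurableEmbedding _) F]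
  congr 1
  funext p
  rw [Complex.measurableEquivRealProd_symm_apply, Complex.mk_eq_add_mul_I]

lemma Gc_apply (a b : ℂ) (x y : ℝ) :
    Gc a b ((x : ℂ) + (y : ℂ) * Complex.I)
      = Ec ((Real.pi:ℂ) * (a + b)) x * Ec ((Real.pi:ℂ) * Complex.I * (b - a)) y := by
  rw [Gc, Ec, Ec, ← Complex.exp_add]
  congr 1
  rw [Complex.normSq_add_mul_I]
  have hconj : (starRingEnd ℂ) ((x : ℂ) + (y : ℂ) * Complex.I)
      = (x : ℂ) - (y : ℂ) * Complex.I := by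
    simp [Complex.conj_ofReal, sub_eq_add_neg]
  rw [hconj]
  push_cast
  ring

lemma exp_quarter (a b : ℂ) :
    Complex.exp (((Real.pi:ℂ) * (a + b)) ^ 2 / (4 * Real.pi))
        * Complex.exp (((Real.pi:ℂ) * Complex.I * (b - a)) ^ 2 / (4 * Real.pi))
      = Complex.exp ((Real.pi:ℂ) * (a * b)) := by
  rw [← Complex.exp_add]
  congr 1
  have hne : ((Real.pi:ℂ)) ≠ 0 := by exact_mod_cast Real.pi_ne_zero
  have hI : (Complex.I) ^ 2 = -1 := Complex.I_sq
  field_simp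
  linear_combination ((a - b) ^ 2) * hI

lemma CL0 (a b : ℂ) :
    ∫ u : ℂ, Gc a b u = Complex.exp ((Real.pi:ℂ) * (a * b)) := by
  rw [integral_complex_eq]
  calc ∫ p : ℝ × ℝ, Gc a b (p.1 + p.2 * Complex.I)
      = ∫ p : ℝ × ℝ, Ec ((Real.pi:ℂ) * (a + b)) p.1
          * Ec ((Real.pi:ℂ) * Complex.I * (b - a)) p.2 := by
        congr 1; funext p; exact Gc_apply a b p.1 p.2
    _ = (∫ x : ℝ, Ec ((Real.pi:ℂ) * (a + b)) x)
          * ∫ y : ℝ, Ec ((Real.pi:ℂ) * Complex.I * (b - a)) y := by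
        rw [MeasureTheory.Measure.volume_eq_prod, integral_prod_mul]
    _ = Complex.exp ((Real.pi:ℂ) * (a * b)) := by rw [R0, R0, exp_quarter]

lemma integrable_Ec (c : ℂ) : Integrable (Ec c) :=
  (integrable_pow_Ec 0 c).congr (Filter.Eventually.of_forall fun x => by simp)

lemma integrable_id_Ec (c : ℂ) : Integrable (fun x : ℝ => (x:ℂ) * Ec c x) := by
  simpa using integrable_pow_Ec 1 c

lemma CL1 (a b : ℂ) :
    ∫ u : ℂ, u * Gc a b u = a * Complex.exp ((Real.pi:ℂ) * (a * b)) := by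
  have hne : ((Real.pi:ℂ)) ≠ 0 := by exact_mod_cast Real.pi_ne_zero
  have hI : (Complex.I) ^ 2 = -1 := Complex.I_sq
  set c₁ := (Real.pi:ℂ) * (a + b) with hc₁
  set c₂ := (Real.pi:ℂ) * Complex.I * (b - a) with hc₂
  rw [integral_complex_eq]
  calc ∫ p : ℝ × ℝ, (p.1 + p.2 * Complex.I) * Gc a b (p.1 + p.2 * Complex.I)
      = ∫ p : ℝ × ℝ, (((p.1:ℂ) * Ec c₁ p.1) * Ec c₂ p.2
          + Ec c₁ p.1 * (Complex.I * ((p.2:ℂ) * Ec c₂ p.2))) := by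
        congr 1; funext p; rw [Gc_apply a b p.1 p.2]; ring
    _ = ((∫ x : ℝ, (x:ℂ) * Ec c₁ x) * ∫ y : ℝ, Ec c₂ y)
          + (∫ x : ℝ, Ec c₁ x) * (Complex.I * ∫ y : ℝ, (y:ℂ) * Ec c₂ y) := by
        rw [MeasureTheory.Measure.volume_eq_prod,
          integral_add ((integrable_id_Ec c₁).mul_prod (integrable_Ec c₂))
            ((integrable_Ec c₁).mul_prod ((integrable_id_Ec c₂).const_mul Complex.I)),
          integral_prod_mul (f := fun x : ℝ => (x:ℂ) * Ec c₁ x) (g := Ec c₂),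
          integral_prod_mul (f := Ec c₁)
            (g := fun y : ℝ => Complex.I * ((y:ℂ) * Ec c₂ y)),
          integral_const_mul]
    _ = a * Complex.exp ((Real.pi:ℂ) * (a * b)) := by
        rw [R1, R1, R0, R0, ← exp_quarter a b]
        rw [hc₁, hc₂]
        set E1 := Complex.exp (((Real.pi:ℂ) * (a + b)) ^ 2 / (4 * Real.pi)) with hE1
        set E2 := Complex.exp (((Real.pi:ℂ) * Complex.I * (b - a)) ^ 2 / (4 * Real.pi)) with hE2
        field_simp
        linear_combination (b - a) * E1 * E2 * hI

lemma CL1' (a b : ℂ) :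
    ∫ u : ℂ, (starRingEnd ℂ) u * Gc a b u
      = b * Complex.exp ((Real.pi:ℂ) * (a * b)) := by
  have hne : ((Real.pi:ℂ)) ≠ 0 := by exact_mod_cast Real.pi_ne_zero
  have hI : (Complex.I) ^ 2 = -1 := Complex.I_sq
  set c₁ := (Real.pi:ℂ) * (a + b) with hc₁
  set c₂ := (Real.pi:ℂ) * Complex.I * (b - a) with hc₂
  rw [integral_complex_eq]
  calc ∫ p : ℝ × ℝ, (starRingEnd ℂ) (p.1 + p.2 * Complex.I) * Gc a b (p.1 + p.2 * Complex.I)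
      = ∫ p : ℝ × ℝ, (((p.1:ℂ) * Ec c₁ p.1) * Ec c₂ p.2
          + Ec c₁ p.1 * (-Complex.I * ((p.2:ℂ) * Ec c₂ p.2))) := by
        congr 1; funext p; rw [Gc_apply a b p.1 p.2]
        rw [show (starRingEnd ℂ) ((p.1:ℂ) + (p.2:ℂ) * Complex.I)
          = (p.1:ℂ) - (p.2:ℂ) * Complex.I from by
            simp [Complex.conj_ofReal, sub_eq_add_neg]]
        ring
    _ = ((∫ x : ℝ, (x:ℂ) * Ec c₁ x) * ∫ y : ℝ, Ec c₂ y)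
          + (∫ x : ℝ, Ec c₁ x) * (-Complex.I * ∫ y : ℝ, (y:ℂ) * Ec c₂ y) := by
        rw [MeasureTheory.Measure.volume_eq_prod,
          integral_add ((integrable_id_Ec c₁).mul_prod (integrable_Ec c₂))
            ((integrable_Ec c₁).mul_prod ((integrable_id_Ec c₂).const_mul (-Complex.I))),
          integral_prod_mul (f := fun x : ℝ => (x:ℂ) * Ec c₁ x) (g := Ec c₂),
          integral_prod_mul (f := Ec c₁)
            (g := fun y : ℝ => -Complex.I * ((y:ℂ) * Ec c₂ y)),
          integral_const_mul]
    _ = b * Complex.exp ((Real.pi:ℂ) * (a * b)) := by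
        rw [R1, R1, R0, R0, ← exp_quarter a b]
        rw [hc₁, hc₂]
        set E1 := Complex.exp (((Real.pi:ℂ) * (a + b)) ^ 2 / (4 * Real.pi)) with hE1
        set E2 := Complex.exp (((Real.pi:ℂ) * Complex.I * (b - a)) ^ 2 / (4 * Real.pi)) with hE2
        field_simp
        linear_combination (a - b) * E1 * E2 * hI

lemma CL2 (a b : ℂ) :
    ∫ u : ℂ, u * (starRingEnd ℂ) u * Gc a b u
      = (1 / (Real.pi:ℂ) + a * b) * Complex.exp ((Real.pi:ℂ) * (a * b)) := by
  have hne : ((Real.pi:ℂ)) ≠ 0 := by exact_mod_cast Real.pi_ne_zero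
  have hI : (Complex.I) ^ 2 = -1 := Complex.I_sq
  set c₁ := (Real.pi:ℂ) * (a + b) with hc₁
  set c₂ := (Real.pi:ℂ) * Complex.I * (b - a) with hc₂
  have hsq : Integrable (fun x : ℝ => (x:ℂ) ^ 2 * Ec c₁ x) := integrable_pow_Ec 2 c₁
  have hsq₂ : Integrable (fun x : ℝ => (x:ℂ) ^ 2 * Ec c₂ x) := integrable_pow_Ec 2 c₂
  rw [integral_complex_eq]
  calc ∫ p : ℝ × ℝ, (p.1 + p.2 * Complex.I) * (starRingEnd ℂ) (p.1 + p.2 * Complex.I)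
        * Gc a b (p.1 + p.2 * Complex.I)
      = ∫ p : ℝ × ℝ, (((p.1:ℂ) ^ 2 * Ec c₁ p.1) * Ec c₂ p.2
          + Ec c₁ p.1 * ((p.2:ℂ) ^ 2 * Ec c₂ p.2)) := by
        congr 1; funext p; rw [Gc_apply a b p.1 p.2]
        rw [Complex.mul_conj, Complex.normSq_add_mul_I]
        push_cast
        ring
    _ = ((∫ x : ℝ, (x:ℂ) ^ 2 * Ec c₁ x) * ∫ y : ℝ, Ec c₂ y)
          + (∫ x : ℝ, Ec c₁ x) * ∫ y : ℝ, (y:ℂ) ^ 2 * Ec c₂ y := by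
        rw [MeasureTheory.Measure.volume_eq_prod,
          integral_add (hsq.mul_prod (integrable_Ec c₂))
            ((integrable_Ec c₁).mul_prod hsq₂),
          integral_prod_mul (f := fun x : ℝ => (x:ℂ) ^ 2 * Ec c₁ x) (g := Ec c₂),
          integral_prod_mul (f := Ec c₁) (g := fun y : ℝ => (y:ℂ) ^ 2 * Ec c₂ y)]
    _ = (1 / (Real.pi:ℂ) + a * b) * Complex.exp ((Real.pi:ℂ) * (a * b)) := by
        rw [R2, R2, R0, R0, ← exp_quarter a b]
        rw [hc₁, hc₂]
        set E1 := Complex.exp (((Real.pi:ℂ) * (a + b)) ^ 2 / (4 * Real.pi)) with hE1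
        set E2 := Complex.exp (((Real.pi:ℂ) * Complex.I * (b - a)) ^ 2 / (4 * Real.pi)) with hE2
        field_simp
        linear_combination (2 * (Real.pi:ℂ) * (a - b) ^ 2) * E1 * E2 * hI

/-- `∫ w_i 𝒫(z, w) w̄_j 𝒫(w, z') dW = ((1/π) δ_{ij} + z_i z̄'_j) 𝒫(z, z')`. -/
theorem bergK_wi_wjbar {n : ℕ} (i j : Fin n) (z z' : Fin n → ℂ) :
    (∫ w : Fin n → ℂ, w i * bergK z w * (starRingEnd ℂ) (w j) * bergK w z')
      = ((1 / (Real.pi : ℂ)) * (if i = j then 1 else 0) + z i * (starRingEnd ℂ) (z' j))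
          * bergK z z' := by
  have hne : ((Real.pi:ℂ)) ≠ 0 := by exact_mod_cast Real.pi_ne_zero
  set C : Fin n → ℂ := fun k =>
    Complex.exp (-((Real.pi:ℂ) / 2)
      * ((Complex.normSq (z k) : ℂ) + (Complex.normSq (z' k) : ℂ))) with hC
  set F : Fin n → ℂ → ℂ := fun k u =>
    ((if k = i then u else 1) * (if k = j then (starRingEnd ℂ) u else 1))
      * (C k * Gc (z k) ((starRingEnd ℂ) (z' k)) u) with hF
  set V : Fin n → ℂ := fun k =>
    C k * Complex.exp ((Real.pi:ℂ) * (z k * (starRingEnd ℂ) (z' k))) with hV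
  set M : Fin n → ℂ := fun k =>
    if k = i then (if k = j then 1 / (Real.pi:ℂ) + z k * (starRingEnd ℂ) (z' k) else z k)
    else (if k = j then (starRingEnd ℂ) (z' k) else 1) with hM
  have key : ∀ w : Fin n → ℂ,
      w i * bergK z w * (starRingEnd ℂ) (w j) * bergK w z' = ∏ k, F k (w k) := by
    intro w
    rw [hF]
    calc w i * bergK z w * (starRingEnd ℂ) (w j) * bergK w z'
        = (∏ k, (if k = i then w k else 1)) * (∏ k, (if k = j then (starRingEnd ℂ) (w k) else 1))
            * Complex.exp (∑ k, (-((Real.pi:ℂ) / 2)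
                * ((Complex.normSq (z k) : ℂ) + (Complex.normSq (z' k) : ℂ))
              + (-(Real.pi:ℂ) * (Complex.normSq (w k) : ℂ)
                + (Real.pi:ℂ) * z k * (starRingEnd ℂ) (w k)
                + (Real.pi:ℂ) * ((starRingEnd ℂ) (z' k)) * (w k)))) := by
          rw [Finset.prod_ite_eq' Finset.univ i (fun k => w k),
            Finset.prod_ite_eq' Finset.univ j (fun k => (starRingEnd ℂ) (w k))]
          simp only [Finset.mem_univ, if_true]
          rw [bergK, bergK]
          rw [show ∀ A B : ℂ, w i * Complex.exp A * (starRingEnd ℂ) (w j) * Complex.exp B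
              = w i * (starRingEnd ℂ) (w j) * Complex.exp (A + B) from
            fun A B => by rw [Complex.exp_add]; ring]
          congr 2
          rw [Finset.mul_sum, Finset.mul_sum, ← Finset.sum_add_distrib]
          exact Finset.sum_congr rfl fun k _ => by push_cast; ring
      _ = ∏ k, (((if k = i then w k else 1) * (if k = j then (starRingEnd ℂ) (w k) else 1))
            * (C k * Gc (z k) ((starRingEnd ℂ) (z' k)) (w k))) := by
          rw [Finset.prod_mul_distrib, Finset.prod_mul_distrib, Complex.exp_sum]
          rw [show (∏ k, Complex.exp (-((Real.pi:ℂ) / 2)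
              * ((Complex.normSq (z k) : ℂ) + (Complex.normSq (z' k) : ℂ))
              + (-(Real.pi:ℂ) * (Complex.normSq (w k) : ℂ)
                + (Real.pi:ℂ) * z k * (starRingEnd ℂ) (w k)
                + (Real.pi:ℂ) * ((starRingEnd ℂ) (z' k)) * (w k))))
              = ∏ k, (C k * Gc (z k) ((starRingEnd ℂ) (z' k)) (w k)) from
            Finset.prod_congr rfl fun k _ => by
              rw [hC, Gc, ← Complex.exp_add]]
  have hfac : ∀ k, (∫ u : ℂ, F k u) = M k * V k := by
    intro k
    by_cases hki : k = i <;> by_cases hkj : k = j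
    · simp only [hF, if_pos hki, if_pos hkj]
      rw [show (fun u : ℂ => (u * (starRingEnd ℂ) u)
            * (C k * Gc (z k) ((starRingEnd ℂ) (z' k)) u))
          = fun u : ℂ => C k * (u * (starRingEnd ℂ) u * Gc (z k) ((starRingEnd ℂ) (z' k)) u)
        from funext fun u => by ring]
      rw [integral_const_mul, CL2]
      simp only [hM, hV]
      rw [if_pos hki, if_pos hkj]
      ring
    · simp only [hF, if_pos hki, if_neg hkj, mul_one]
      rw [show (fun u : ℂ => u * (C k * Gc (z k) ((starRingEnd ℂ) (z' k)) u))
          = fun u : ℂ => C k * (u * Gc (z k) ((starRingEnd ℂ) (z' k)) u)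
        from funext fun u => by ring]
      rw [integral_const_mul, CL1]
      simp only [hM, hV]
      rw [if_pos hki, if_neg hkj]
      ring
    · simp only [hF, if_neg hki, if_pos hkj, one_mul]
      rw [show (fun u : ℂ => (starRingEnd ℂ) u * (C k * Gc (z k) ((starRingEnd ℂ) (z' k)) u))
          = fun u : ℂ => C k * ((starRingEnd ℂ) u * Gc (z k) ((starRingEnd ℂ) (z' k)) u)
        from funext fun u => by ring]
      rw [integral_const_mul, CL1']
      simp only [hM, hV]
      rw [if_neg hki, if_pos hkj]
      ring
    · simp only [hF, if_neg hki, if_neg hkj, one_mul, mul_one]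
      rw [integral_const_mul, CL0]
      simp only [hM, hV]
      rw [if_neg hki, if_neg hkj]
      ring
  have hVprod : ∏ k, V k = bergK z z' := by
    rw [bergK, hV]
    simp only [hC]
    rw [show (fun k => Complex.exp (-((Real.pi:ℂ) / 2)
          * ((Complex.normSq (z k) : ℂ) + (Complex.normSq (z' k) : ℂ)))
          * Complex.exp ((Real.pi:ℂ) * (z k * (starRingEnd ℂ) (z' k))))
        = fun k => Complex.exp (-((Real.pi:ℂ) / 2)
            * ((Complex.normSq (z k) : ℂ) + (Complex.normSq (z' k) : ℂ))
          + (Real.pi:ℂ) * (z k * (starRingEnd ℂ) (z' k))) from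
      funext fun k => by rw [← Complex.exp_add]]
    rw [← Complex.exp_sum]
    congr 1
    rw [Finset.mul_sum]
    exact Finset.sum_congr rfl fun k _ => by ring
  have hMprod : ∏ k, M k
      = (1 / (Real.pi : ℂ)) * (if i = j then 1 else 0) + z i * (starRingEnd ℂ) (z' j) := by
    rcases eq_or_ne i j with rfl | hij
    · have hMk : ∀ k, M k = if k = i then 1 / (Real.pi:ℂ)
          + z k * (starRingEnd ℂ) (z' k) else 1 := by
        intro k
        by_cases h : k = i <;> simp [hM, h]
      rw [Finset.prod_congr rfl (fun k _ => hMk k),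
        Finset.prod_ite_eq' Finset.univ i
          (fun k => 1 / (Real.pi:ℂ) + z k * (starRingEnd ℂ) (z' k))]
      simp only [Finset.mem_univ, if_true, if_pos rfl]
      ring
    · have hMk : ∀ k, M k = (if k = i then z k else 1)
          * (if k = j then (starRingEnd ℂ) (z' k) else 1) := by
        intro k
        by_cases h1 : k = i <;> by_cases h2 : k = j
        · exact absurd (h1.symm.trans h2) hij
        all_goals simp [hM, h1, h2, hij, Ne.symm hij]
      rw [Finset.prod_congr rfl (fun k _ => hMk k), Finset.prod_mul_distrib,
        Finset.prod_ite_eq' Finset.univ i (fun k => z k),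
        Finset.prod_ite_eq' Finset.univ j (fun k => (starRingEnd ℂ) (z' k))]
      simp only [Finset.mem_univ, if_true, if_neg hij]
      ring
  calc (∫ w : Fin n → ℂ, w i * bergK z w * (starRingEnd ℂ) (w j) * bergK w z')
      = ∫ w : Fin n → ℂ, ∏ k, F k (w k) := by
        congr 1; funext w; exact key w
    _ = ∏ k, ∫ u : ℂ, F k u := MeasureTheory.integral_fintype_prod_eq_prod (ι := Fin n) F
    _ = ∏ k, (M k * V k) := Finset.prod_congr rfl fun k _ => hfac k
    _ = (∏ k, M k) * ∏ k, V k := Finset.prod_mul_distrib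
    _ = ((1 / (Real.pi : ℂ)) * (if i = j then 1 else 0)
          + z i * (starRingEnd ℂ) (z' j)) * bergK z z' := by rw [hMprod, hVprod]
end
end

section
/- For all 1 ≤ i, j ≤ n and all z, z' ∈ ℂ^n, ∫_{ℂ^n} w̄_i · w_j · 𝒫(z, w) · 𝒫(w, z') dW = ((1/π) δ_{ij} + z̄'_i z_j) · 𝒫(z, z'). -/
open MeasureTheory Complex

noncomputable section

private lemma pi_c_ne : (Real.pi : ℂ) ≠ 0 := Complex.ofReal_ne_zero.2 Real.pi_ne_zero

/-- Integrability of `x^k exp(-π x² + c x)`. -/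
private lemma intk (k : ℕ) (c : ℂ) :
    Integrable fun x : ℝ => (x : ℂ) ^ k * Complex.exp (-(Real.pi : ℂ) * x ^ 2 + c * x) := by
  have hπ := Real.pi_pos
  have hmaj : Integrable fun x : ℝ =>
      Real.exp (c.re ^ 2 / (2 * Real.pi)) * |x ^ (k : ℝ) * Real.exp (-(Real.pi / 2) * x ^ 2)| :=
    ((integrable_rpow_mul_exp_neg_mul_sq (b := Real.pi / 2) (s := (k : ℝ)) (by positivity)
      (neg_one_lt_zero.trans_le (Nat.cast_nonneg k : (0 : ℝ) ≤ (k : ℝ)))).abs).const_mul _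
  refine hmaj.mono' ?_ ?_
  · apply Continuous.aestronglyMeasurable
    exact (continuous_ofReal.pow k).mul
      (((continuous_const.mul (continuous_ofReal.pow 2)).add
        (continuous_const.mul continuous_ofReal)).cexp)
  · filter_upwards with x
    have hre : (-(Real.pi : ℂ) * x ^ 2 + c * x).re = -Real.pi * x ^ 2 + c.re * x := by
      simp only [← Complex.ofReal_pow, Complex.add_re, Complex.neg_re, Complex.mul_re,
        Complex.neg_im, Complex.ofReal_re, Complex.ofReal_im, mul_zero, sub_zero]
    have hnorm : ‖(x : ℂ) ^ k * Complex.exp (-(Real.pi : ℂ) * x ^ 2 + c * x)‖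
        = |x| ^ k * Real.exp (-Real.pi * x ^ 2 + c.re * x) := by
      rw [norm_mul, Complex.norm_exp, hre, norm_pow, Complex.norm_real, Real.norm_eq_abs]
    rw [hnorm]
    have hkey : -Real.pi * x ^ 2 + c.re * x
        ≤ c.re ^ 2 / (2 * Real.pi) + (-(Real.pi / 2) * x ^ 2) := by
      rw [← sub_nonneg]
      have : c.re ^ 2 / (2 * Real.pi) + (-(Real.pi / 2) * x ^ 2)
          - (-Real.pi * x ^ 2 + c.re * x) = (c.re - Real.pi * x) ^ 2 / (2 * Real.pi) := by
        field_simp; ring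
      rw [this]; positivity
    calc |x| ^ k * Real.exp (-Real.pi * x ^ 2 + c.re * x)
        ≤ |x| ^ k * (Real.exp (c.re ^ 2 / (2 * Real.pi)) * Real.exp (-(Real.pi / 2) * x ^ 2)) := by
          rw [← Real.exp_add]
          exact mul_le_mul_of_nonneg_left (Real.exp_le_exp.2 hkey) (by positivity)
      _ = Real.exp (c.re ^ 2 / (2 * Real.pi)) * |x ^ (k : ℝ) * Real.exp (-(Real.pi / 2) * x ^ 2)| := by
          rw [abs_mul, Real.abs_exp, Real.rpow_natCast, _root_.abs_pow]; ring

private lemma M0 (c : ℂ) :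
    ∫ x : ℝ, Complex.exp (-(Real.pi : ℂ) * x ^ 2 + c * x)
      = Complex.exp (c ^ 2 / (4 * Real.pi)) := by
  have hb : (-(Real.pi : ℂ)).re < 0 := by simpa using Real.pi_pos
  have h := integral_cexp_quadratic hb c 0
  simp only [add_zero, zero_sub, neg_neg] at h
  rw [div_self pi_c_ne, one_cpow, one_mul] at h
  rw [h]; congr 1
  rw [mul_neg, div_neg, neg_neg]

private lemma hderivE (c : ℂ) (x : ℝ) :
    HasDerivAt (fun x : ℝ => Complex.exp (-(Real.pi : ℂ) * x ^ 2 + c * x))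
      ((-2 * Real.pi * x + c) * Complex.exp (-(Real.pi : ℂ) * x ^ 2 + c * x)) x := by
  have hx : HasDerivAt (fun y : ℝ => (y : ℂ)) 1 x := (hasDerivAt_id x).ofReal_comp
  have h1 : HasDerivAt (fun y : ℝ => -(Real.pi : ℂ) * (y : ℂ) ^ 2 + c * y)
      (-2 * Real.pi * x + c) x := by
    have heq : (fun y : ℝ => -(Real.pi : ℂ) * (y : ℂ) ^ 2 + c * y)
        = fun y : ℝ => -(Real.pi : ℂ) * ((y : ℂ) * (y : ℂ)) + c * y := by
      funext y; ring
    rw [heq]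
    have := (((hx.mul hx)).const_mul (-(Real.pi : ℂ))).add (hx.const_mul c)
    exact this.congr_deriv (by ring)
  simpa [mul_comm] using h1.cexp

private lemma M1 (c : ℂ) :
    ∫ x : ℝ, (x : ℂ) * Complex.exp (-(Real.pi : ℂ) * x ^ 2 + c * x)
      = c / (2 * Real.pi) * Complex.exp (c ^ 2 / (4 * Real.pi)) := by
  have hint : Integrable fun x : ℝ =>
      (-2 * (Real.pi : ℂ) * x + c) * Complex.exp (-(Real.pi : ℂ) * x ^ 2 + c * x) := by
    have : (fun x : ℝ => (-2 * (Real.pi : ℂ) * x + c) * Complex.exp (-(Real.pi : ℂ) * x ^ 2 + c * x))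
        = fun x : ℝ => -2 * (Real.pi : ℂ) * ((x : ℂ) ^ 1 * Complex.exp (-(Real.pi : ℂ) * x ^ 2 + c * x))
          + c * ((x : ℂ) ^ 0 * Complex.exp (-(Real.pi : ℂ) * x ^ 2 + c * x)) := by
      funext x; ring
    rw [this]
    exact ((intk 1 c).const_mul _).add ((intk 0 c).const_mul _)
  have hE : Integrable fun x : ℝ => Complex.exp (-(Real.pi : ℂ) * x ^ 2 + c * x) := by
    simpa using intk 0 c
  have hxE : Integrable fun x : ℝ => (x : ℂ) * Complex.exp (-(Real.pi : ℂ) * x ^ 2 + c * x) := by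
    simpa using intk 1 c
  have hz := integral_eq_zero_of_hasDerivAt_of_integrable (fun x => hderivE c x) hint hE
  have hrw : (fun x : ℝ => (-2 * (Real.pi : ℂ) * x + c) * Complex.exp (-(Real.pi : ℂ) * x ^ 2 + c * x))
      = fun x : ℝ => -2 * (Real.pi : ℂ) * ((x : ℂ) * Complex.exp (-(Real.pi : ℂ) * x ^ 2 + c * x))
        + c * Complex.exp (-(Real.pi : ℂ) * x ^ 2 + c * x) := by
    funext x; ring
  rw [hrw, integral_add (hxE.const_mul _) (hE.const_mul c), integral_const_mul,
    integral_const_mul, M0] at hz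
  have h2 : (2 * (Real.pi : ℂ)) ≠ 0 := mul_ne_zero two_ne_zero pi_c_ne
  rw [div_mul_eq_mul_div, eq_div_iff h2]
  linear_combination -hz

private lemma M2 (c : ℂ) :
    ∫ x : ℝ, (x : ℂ) ^ 2 * Complex.exp (-(Real.pi : ℂ) * x ^ 2 + c * x)
      = (1 / (2 * Real.pi) + c ^ 2 / (4 * Real.pi ^ 2)) * Complex.exp (c ^ 2 / (4 * Real.pi)) := by
  have hx : ∀ x : ℝ, HasDerivAt (fun y : ℝ => (y : ℂ)) 1 x :=
    fun x => (hasDerivAt_id x).ofReal_comp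
  have hder : ∀ x : ℝ, HasDerivAt
      (fun y : ℝ => (y : ℂ) * Complex.exp (-(Real.pi : ℂ) * y ^ 2 + c * y))
      ((1 + c * x + -2 * Real.pi * x ^ 2) * Complex.exp (-(Real.pi : ℂ) * x ^ 2 + c * x)) x := by
    intro x
    have := (hx x).mul (hderivE c x)
    exact this.congr_deriv (by ring)
  have hint : Integrable fun x : ℝ =>
      (1 + c * x + -2 * Real.pi * x ^ 2) * Complex.exp (-(Real.pi : ℂ) * x ^ 2 + c * x) := by
    have : (fun x : ℝ => (1 + c * x + -2 * Real.pi * x ^ 2)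
          * Complex.exp (-(Real.pi : ℂ) * x ^ 2 + c * x))
        = fun x : ℝ => ((x : ℂ) ^ 0 * Complex.exp (-(Real.pi : ℂ) * x ^ 2 + c * x)
          + c * ((x : ℂ) ^ 1 * Complex.exp (-(Real.pi : ℂ) * x ^ 2 + c * x)))
          + -2 * Real.pi * ((x : ℂ) ^ 2 * Complex.exp (-(Real.pi : ℂ) * x ^ 2 + c * x)) := by
      funext x; ring
    rw [this]
    exact (((intk 0 c).add ((intk 1 c).const_mul c))).add ((intk 2 c).const_mul _)
  have hE : Integrable fun x : ℝ => Complex.exp (-(Real.pi : ℂ) * x ^ 2 + c * x) := by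
    simpa using intk 0 c
  have hxE : Integrable fun x : ℝ => (x : ℂ) * Complex.exp (-(Real.pi : ℂ) * x ^ 2 + c * x) := by
    simpa using intk 1 c
  have hz := integral_eq_zero_of_hasDerivAt_of_integrable hder hint hxE
  have hrw : (fun x : ℝ => (1 + c * x + -2 * Real.pi * x ^ 2)
        * Complex.exp (-(Real.pi : ℂ) * x ^ 2 + c * x))
      = fun x : ℝ => (Complex.exp (-(Real.pi : ℂ) * x ^ 2 + c * x)
        + c * ((x : ℂ) * Complex.exp (-(Real.pi : ℂ) * x ^ 2 + c * x)))
        + -2 * Real.pi * ((x : ℂ) ^ 2 * Complex.exp (-(Real.pi : ℂ) * x ^ 2 + c * x)) := by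
    funext x; ring
  have hsum : Integrable fun x : ℝ => Complex.exp (-(Real.pi : ℂ) * x ^ 2 + c * x)
      + c * ((x : ℂ) * Complex.exp (-(Real.pi : ℂ) * x ^ 2 + c * x)) :=
    hE.add (hxE.const_mul c)
  rw [hrw, integral_add hsum ((intk 2 c).const_mul _),
    integral_add hE (hxE.const_mul c),
    integral_const_mul, integral_const_mul, M0, M1] at hz
  have h2 : (2 * (Real.pi : ℂ)) ≠ 0 := mul_ne_zero two_ne_zero pi_c_ne
  rw [show (1 / (2 * (Real.pi : ℂ)) + c ^ 2 / (4 * (Real.pi : ℂ) ^ 2))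
        * Complex.exp (c ^ 2 / (4 * Real.pi))
      = (Complex.exp (c ^ 2 / (4 * Real.pi))
          + c * (c / (2 * Real.pi) * Complex.exp (c ^ 2 / (4 * Real.pi)))) / (2 * Real.pi) from by
    field_simp [pi_c_ne]
    ring]
  rw [eq_div_iff h2]
  linear_combination -hz

private lemma transfer (f : ℂ → ℂ) (g : ℝ × ℝ → ℂ)
    (h : ∀ p : ℝ × ℝ, f ((p.1 : ℂ) + (p.2 : ℂ) * Complex.I) = g p) :
    ∫ w : ℂ, f w = ∫ p : ℝ × ℝ, g p ∂((volume : Measure ℝ).prod volume) := by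
  rw [← (Complex.volume_preserving_equiv_real_prod.symm _).integral_comp
    Complex.measurableEquivRealProd.symm.measurableEmbedding f, ← MeasureTheory.Measure.volume_eq_prod]
  congr 1
  funext p
  rw [Complex.measurableEquivRealProd_symm_apply, Complex.mk_eq_add_mul_I, h]

private lemma expo_split (a b : ℂ) (x y : ℝ) :
    -(Real.pi : ℂ) * Complex.normSq ((x : ℂ) + (y : ℂ) * Complex.I)
        + a * ((x : ℂ) + (y : ℂ) * Complex.I)
        + b * (starRingEnd ℂ) ((x : ℂ) + (y : ℂ) * Complex.I)
      = (-(Real.pi : ℂ) * x ^ 2 + (a + b) * x)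
        + (-(Real.pi : ℂ) * y ^ 2 + (Complex.I * (a - b)) * y) := by
  have h1 : (Complex.normSq ((x : ℂ) + (y : ℂ) * Complex.I) : ℂ) = (x : ℂ) ^ 2 + (y : ℂ) ^ 2 := by
    rw [Complex.normSq_add_mul_I]; push_cast; ring
  rw [h1, map_add, map_mul, Complex.conj_ofReal, Complex.conj_ofReal, Complex.conj_I]
  ring

private lemma exp_prod (a b : ℂ) :
    Complex.exp ((a + b) ^ 2 / (4 * Real.pi))
        * Complex.exp ((Complex.I * (a - b)) ^ 2 / (4 * Real.pi))
      = Complex.exp (a * b / Real.pi) := by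
  rw [← Complex.exp_add]
  congr 1
  have h2 : (Complex.I * (a - b)) ^ 2 = -((a - b) ^ 2) := by
    rw [mul_pow, Complex.I_sq]; ring
  rw [h2]
  field_simp [pi_c_ne]
  ring

private lemma CC0 (a b : ℂ) :
    ∫ w : ℂ, Complex.exp (-(Real.pi : ℂ) * Complex.normSq w + a * w + b * (starRingEnd ℂ) w)
      = Complex.exp (a * b / Real.pi) := by
  rw [transfer _ (fun p : ℝ × ℝ => Complex.exp (-(Real.pi : ℂ) * p.1 ^ 2 + (a + b) * p.1)
      * Complex.exp (-(Real.pi : ℂ) * p.2 ^ 2 + (Complex.I * (a - b)) * p.2))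
    (fun p => by rw [expo_split a b p.1 p.2, Complex.exp_add]),
    integral_prod_mul (fun x : ℝ => Complex.exp (-(Real.pi : ℂ) * x ^ 2 + (a + b) * x))
      (fun y : ℝ => Complex.exp (-(Real.pi : ℂ) * y ^ 2 + (Complex.I * (a - b)) * y)),
    M0, M0, exp_prod]

private lemma CC1 (a b : ℂ) :
    ∫ w : ℂ, w * Complex.exp (-(Real.pi : ℂ) * Complex.normSq w + a * w + b * (starRingEnd ℂ) w)
      = b / Real.pi * Complex.exp (a * b / Real.pi) := by
  have hF1 : Integrable fun x : ℝ => (x : ℂ)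
      * Complex.exp (-(Real.pi : ℂ) * x ^ 2 + (a + b) * x) := by simpa using intk 1 (a + b)
  have hF2 : Integrable fun x : ℝ =>
      Complex.exp (-(Real.pi : ℂ) * x ^ 2 + (a + b) * x) := by simpa using intk 0 (a + b)
  have hG1 : Integrable fun y : ℝ =>
      Complex.exp (-(Real.pi : ℂ) * y ^ 2 + (Complex.I * (a - b)) * y) := by
    simpa using intk 0 (Complex.I * (a - b))
  have hG2 : Integrable fun y : ℝ => Complex.I * ((y : ℂ)
      * Complex.exp (-(Real.pi : ℂ) * y ^ 2 + (Complex.I * (a - b)) * y)) :=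
    (by simpa using intk 1 (Complex.I * (a - b)) : Integrable (fun y : ℝ => (y : ℂ) * Complex.exp (-(Real.pi : ℂ) * y ^ 2 + (Complex.I * (a - b)) * y))).const_mul _
  rw [transfer _ (fun p : ℝ × ℝ =>
      ((p.1 : ℂ) * Complex.exp (-(Real.pi : ℂ) * p.1 ^ 2 + (a + b) * p.1))
        * Complex.exp (-(Real.pi : ℂ) * p.2 ^ 2 + (Complex.I * (a - b)) * p.2)
      + Complex.exp (-(Real.pi : ℂ) * p.1 ^ 2 + (a + b) * p.1)
        * (Complex.I * ((p.2 : ℂ)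
            * Complex.exp (-(Real.pi : ℂ) * p.2 ^ 2 + (Complex.I * (a - b)) * p.2))))
    (fun p => by rw [expo_split a b p.1 p.2, Complex.exp_add]; ring),
    integral_add (hF1.mul_prod hG1) (hF2.mul_prod hG2),
    integral_prod_mul (fun x : ℝ => (x : ℂ) * Complex.exp (-(Real.pi : ℂ) * x ^ 2 + (a + b) * x))
      (fun y : ℝ => Complex.exp (-(Real.pi : ℂ) * y ^ 2 + (Complex.I * (a - b)) * y)),
    integral_prod_mul (fun x : ℝ => Complex.exp (-(Real.pi : ℂ) * x ^ 2 + (a + b) * x))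
      (fun y : ℝ => Complex.I * ((y : ℂ)
        * Complex.exp (-(Real.pi : ℂ) * y ^ 2 + (Complex.I * (a - b)) * y))),
    M1, M0, M0, integral_const_mul, M1, ← exp_prod a b]
  linear_combination (Complex.exp ((a + b) ^ 2 / (4 * Real.pi))
    * Complex.exp ((Complex.I * (a - b)) ^ 2 / (4 * Real.pi))
    * (a - b) / (2 * (Real.pi : ℂ))) * Complex.I_sq

private lemma CC1' (a b : ℂ) :
    ∫ w : ℂ, (starRingEnd ℂ) w
        * Complex.exp (-(Real.pi : ℂ) * Complex.normSq w + a * w + b * (starRingEnd ℂ) w)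
      = a / Real.pi * Complex.exp (a * b / Real.pi) := by
  have hF1 : Integrable fun x : ℝ => (x : ℂ)
      * Complex.exp (-(Real.pi : ℂ) * x ^ 2 + (a + b) * x) := by simpa using intk 1 (a + b)
  have hF2 : Integrable fun x : ℝ =>
      Complex.exp (-(Real.pi : ℂ) * x ^ 2 + (a + b) * x) := by simpa using intk 0 (a + b)
  have hG1 : Integrable fun y : ℝ =>
      Complex.exp (-(Real.pi : ℂ) * y ^ 2 + (Complex.I * (a - b)) * y) := by
    simpa using intk 0 (Complex.I * (a - b))
  have hG2 : Integrable fun y : ℝ => -Complex.I * ((y : ℂ)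
      * Complex.exp (-(Real.pi : ℂ) * y ^ 2 + (Complex.I * (a - b)) * y)) :=
    (by simpa using intk 1 (Complex.I * (a - b)) : Integrable (fun y : ℝ => (y : ℂ) * Complex.exp (-(Real.pi : ℂ) * y ^ 2 + (Complex.I * (a - b)) * y))).const_mul _
  rw [transfer _ (fun p : ℝ × ℝ =>
      ((p.1 : ℂ) * Complex.exp (-(Real.pi : ℂ) * p.1 ^ 2 + (a + b) * p.1))
        * Complex.exp (-(Real.pi : ℂ) * p.2 ^ 2 + (Complex.I * (a - b)) * p.2)
      + Complex.exp (-(Real.pi : ℂ) * p.1 ^ 2 + (a + b) * p.1)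
        * (-Complex.I * ((p.2 : ℂ)
            * Complex.exp (-(Real.pi : ℂ) * p.2 ^ 2 + (Complex.I * (a - b)) * p.2))))
    (fun p => by
      rw [expo_split a b p.1 p.2, Complex.exp_add, map_add, map_mul,
        Complex.conj_ofReal, Complex.conj_ofReal, Complex.conj_I]
      ring),
    integral_add (hF1.mul_prod hG1) (hF2.mul_prod hG2),
    integral_prod_mul (fun x : ℝ => (x : ℂ) * Complex.exp (-(Real.pi : ℂ) * x ^ 2 + (a + b) * x))
      (fun y : ℝ => Complex.exp (-(Real.pi : ℂ) * y ^ 2 + (Complex.I * (a - b)) * y)),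
    integral_prod_mul (fun x : ℝ => Complex.exp (-(Real.pi : ℂ) * x ^ 2 + (a + b) * x))
      (fun y : ℝ => (-Complex.I) * ((y : ℂ)
        * Complex.exp (-(Real.pi : ℂ) * y ^ 2 + (Complex.I * (a - b)) * y))),
    M1, M0, M0, integral_const_mul, M1, ← exp_prod a b]
  linear_combination (-(Complex.exp ((a + b) ^ 2 / (4 * Real.pi))
    * Complex.exp ((Complex.I * (a - b)) ^ 2 / (4 * Real.pi))
    * (a - b) / (2 * (Real.pi : ℂ)))) * Complex.I_sq

private lemma CC2 (a b : ℂ) :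
    ∫ w : ℂ, (starRingEnd ℂ) w * w
        * Complex.exp (-(Real.pi : ℂ) * Complex.normSq w + a * w + b * (starRingEnd ℂ) w)
      = (1 / Real.pi + a * b / (Real.pi : ℂ) ^ 2) * Complex.exp (a * b / Real.pi) := by
  have hF1 : Integrable fun x : ℝ => (x : ℂ) ^ 2
      * Complex.exp (-(Real.pi : ℂ) * x ^ 2 + (a + b) * x) := intk 2 (a + b)
  have hF2 : Integrable fun x : ℝ =>
      Complex.exp (-(Real.pi : ℂ) * x ^ 2 + (a + b) * x) := by simpa using intk 0 (a + b)
  have hG1 : Integrable fun y : ℝ =>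
      Complex.exp (-(Real.pi : ℂ) * y ^ 2 + (Complex.I * (a - b)) * y) := by
    simpa using intk 0 (Complex.I * (a - b))
  have hG2 : Integrable fun y : ℝ => (y : ℂ) ^ 2
      * Complex.exp (-(Real.pi : ℂ) * y ^ 2 + (Complex.I * (a - b)) * y) :=
    intk 2 (Complex.I * (a - b))
  rw [transfer _ (fun p : ℝ × ℝ =>
      ((p.1 : ℂ) ^ 2 * Complex.exp (-(Real.pi : ℂ) * p.1 ^ 2 + (a + b) * p.1))
        * Complex.exp (-(Real.pi : ℂ) * p.2 ^ 2 + (Complex.I * (a - b)) * p.2)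
      + Complex.exp (-(Real.pi : ℂ) * p.1 ^ 2 + (a + b) * p.1)
        * ((p.2 : ℂ) ^ 2
            * Complex.exp (-(Real.pi : ℂ) * p.2 ^ 2 + (Complex.I * (a - b)) * p.2)))
    (fun p => by
      rw [expo_split a b p.1 p.2, Complex.exp_add, map_add, map_mul,
        Complex.conj_ofReal, Complex.conj_ofReal, Complex.conj_I]
      linear_combination (-((p.2 : ℂ) ^ 2)
        * Complex.exp (-(Real.pi : ℂ) * p.1 ^ 2 + (a + b) * p.1)
        * Complex.exp (-(Real.pi : ℂ) * p.2 ^ 2 + (Complex.I * (a - b)) * p.2)) * Complex.I_sq),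
    integral_add (hF1.mul_prod hG1) (hF2.mul_prod hG2),
    integral_prod_mul (fun x : ℝ => (x : ℂ) ^ 2 * Complex.exp (-(Real.pi : ℂ) * x ^ 2 + (a + b) * x))
      (fun y : ℝ => Complex.exp (-(Real.pi : ℂ) * y ^ 2 + (Complex.I * (a - b)) * y)),
    integral_prod_mul (fun x : ℝ => Complex.exp (-(Real.pi : ℂ) * x ^ 2 + (a + b) * x))
      (fun y : ℝ => (y : ℂ) ^ 2
        * Complex.exp (-(Real.pi : ℂ) * y ^ 2 + (Complex.I * (a - b)) * y)),
    M2, M0, M0, M2, ← exp_prod a b]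
  linear_combination (Complex.exp ((a + b) ^ 2 / (4 * Real.pi))
    * Complex.exp ((Complex.I * (a - b)) ^ 2 / (4 * Real.pi))
    * (a - b) ^ 2 / (4 * (Real.pi : ℂ) ^ 2)) * Complex.I_sq

/-- `∫ w̄_i w_j 𝒫(z, w) 𝒫(w, z') dW = ((1/π) δ_{ij} + z̄'_i z_j) 𝒫(z, z')`. -/
theorem bergK_wibar_wj {n : ℕ} (i j : Fin n) (z z' : Fin n → ℂ) :
    (∫ w : Fin n → ℂ, (starRingEnd ℂ) (w i) * w j * bergK z w * bergK w z')
      = ((1 / (Real.pi : ℂ)) * (if i = j then 1 else 0) + (starRingEnd ℂ) (z' i) * z j)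
          * bergK z z' := by
  classical
  set f : Fin n → ℂ → ℂ := fun k w =>
    (if k = i then (starRingEnd ℂ) w else 1) * (if k = j then w else 1) *
      (Complex.exp (-((Real.pi : ℂ) / 2)
          * ((Complex.normSq (z k) : ℂ) + (Complex.normSq (z' k) : ℂ)))
        * Complex.exp (-(Real.pi : ℂ) * (Complex.normSq w : ℂ)
            + ((Real.pi : ℂ) * (starRingEnd ℂ) (z' k)) * w
            + ((Real.pi : ℂ) * z k) * (starRingEnd ℂ) w)) with hf
  have key : (fun w : Fin n → ℂ => (starRingEnd ℂ) (w i) * w j * bergK z w * bergK w z')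
      = fun w => ∏ k, f k (w k) := by
    funext w
    have h1 : ∏ k, f k (w k)
        = (starRingEnd ℂ) (w i) * (w j * (bergK z w * bergK w z')) := by
      simp only [hf]
      rw [Finset.prod_mul_distrib, Finset.prod_mul_distrib,
        Finset.prod_ite_eq' Finset.univ i (fun k => (starRingEnd ℂ) (w k)),
        Finset.prod_ite_eq' Finset.univ j (fun k => w k)]
      simp only [Finset.mem_univ, if_true, mul_assoc]
      congr 2
      simp_rw [← Complex.exp_add]
      rw [← Complex.exp_sum]
      simp only [bergK]
      rw [← Complex.exp_add]
      congr 1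
      rw [Finset.mul_sum, Finset.mul_sum, ← Finset.sum_add_distrib]
      refine Finset.sum_congr rfl fun k _ => ?_
      ring
    rw [h1]; ring
  rw [key, MeasureTheory.integral_fintype_prod_volume_eq_prod f]
  have hstep : ∀ k : Fin n, ∫ w : ℂ, f k w
      = (if k = i then (if k = j
              then 1 / (Real.pi : ℂ) + (starRingEnd ℂ) (z' k) * z k
              else (starRingEnd ℂ) (z' k))
            else (if k = j then z k else 1))
        * Complex.exp (-((Real.pi : ℂ) / 2) * ((Complex.normSq (z k) : ℂ)
            + (Complex.normSq (z' k) : ℂ) - 2 * z k * (starRingEnd ℂ) (z' k))) := by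
    intro k
    have hpull : ∀ w : ℂ, f k w
        = Complex.exp (-((Real.pi : ℂ) / 2)
            * ((Complex.normSq (z k) : ℂ) + (Complex.normSq (z' k) : ℂ)))
          * ((if k = i then (starRingEnd ℂ) w else 1) * (if k = j then w else 1)
            * Complex.exp (-(Real.pi : ℂ) * (Complex.normSq w : ℂ)
                + ((Real.pi : ℂ) * (starRingEnd ℂ) (z' k)) * w
                + ((Real.pi : ℂ) * z k) * (starRingEnd ℂ) w)) := fun w => by
      simp only [hf]; ring
    simp_rw [hpull]
    rw [MeasureTheory.integral_const_mul]
    have hexp : Complex.exp (-((Real.pi : ℂ) / 2)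
          * ((Complex.normSq (z k) : ℂ) + (Complex.normSq (z' k) : ℂ)))
        * Complex.exp (((Real.pi : ℂ) * (starRingEnd ℂ) (z' k)) * ((Real.pi : ℂ) * z k)
            / Real.pi)
      = Complex.exp (-((Real.pi : ℂ) / 2) * ((Complex.normSq (z k) : ℂ)
          + (Complex.normSq (z' k) : ℂ) - 2 * z k * (starRingEnd ℂ) (z' k))) := by
      rw [← Complex.exp_add]
      congr 1
      field_simp [pi_c_ne]
      ring
    by_cases hki : k = i <;> by_cases hkj : k = j
    · simp only [if_pos hki, if_pos hkj, one_mul, mul_one]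
      rw [CC2, mul_left_comm, hexp]
      congr 1
      field_simp [pi_c_ne]
    · simp only [if_pos hki, if_neg hkj, one_mul, mul_one]
      rw [CC1', mul_left_comm, hexp]
      congr 1
      field_simp [pi_c_ne]
    · simp only [if_neg hki, if_pos hkj, one_mul, mul_one]
      rw [CC1, mul_left_comm, hexp]
      congr 1
      field_simp [pi_c_ne]
    · simp only [if_neg hki, if_neg hkj, one_mul, mul_one]
      rw [CC0, hexp]
  rw [Finset.prod_congr rfl (fun k _ => hstep k), Finset.prod_mul_distrib]
  have hG : (∏ k, Complex.exp (-((Real.pi : ℂ) / 2) * ((Complex.normSq (z k) : ℂ)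
      + (Complex.normSq (z' k) : ℂ) - 2 * z k * (starRingEnd ℂ) (z' k)))) = bergK z z' := by
    rw [← Complex.exp_sum]
    simp only [bergK]
    congr 1
    rw [Finset.mul_sum]
  rw [hG]
  congr 1
  by_cases hij : i = j
  · subst hij
    have hcoef : ∀ k : Fin n, (if k = i then (if k = i
            then 1 / (Real.pi : ℂ) + (starRingEnd ℂ) (z' k) * z k
            else (starRingEnd ℂ) (z' k))
          else (if k = i then z k else 1))
        = if k = i then 1 / (Real.pi : ℂ) + (starRingEnd ℂ) (z' k) * z k else 1 := by
      intro k; split_ifs <;> rfl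
    rw [Finset.prod_congr rfl (fun k _ => hcoef k),
      Finset.prod_ite_eq' Finset.univ i
        (fun k => 1 / (Real.pi : ℂ) + (starRingEnd ℂ) (z' k) * z k)]
    simp only [Finset.mem_univ, if_true]
    ring
  · have hcoef : ∀ k : Fin n, (if k = i then (if k = j
            then 1 / (Real.pi : ℂ) + (starRingEnd ℂ) (z' k) * z k
            else (starRingEnd ℂ) (z' k))
          else (if k = j then z k else 1))
        = (if k = i then (starRingEnd ℂ) (z' k) else 1) * (if k = j then z k else 1) := by
      intro k
      split_ifs with h1 h2 <;> first
        | (exfalso; exact hij (h1 ▸ h2 ▸ rfl))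
        | ring
    rw [Finset.prod_congr rfl (fun k _ => hcoef k), Finset.prod_mul_distrib,
      Finset.prod_ite_eq' Finset.univ i (fun k => (starRingEnd ℂ) (z' k)),
      Finset.prod_ite_eq' Finset.univ j (fun k => z k)]
    simp only [Finset.mem_univ, if_true, if_neg hij]
    ring
end
end
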